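/- arXiv:1705.03784 — 9 statements merged into one kernel-verified Lean document; each statement's English description precedes it below -/
import Mathlib

section
/- Let m ≥ 1 and let C be a real m×m matrix such that ⟨C y, y⟩ ≤ 0 for every y ∈ ℝ^m and whose off-diagonal entries are nonnegative (C_{ij} ≥ 0 whenever i ≠ j). If λ ∈ ℂ is a complex eigenvalue of C with Re λ = 0, then λ = 0; that is, 0 is the only possible eigenvalue of C lying on the imaginary axis. -/
open Matrix

/-- If `C` is a real `m × m` matrix (`m ≥ 1`) with nonpositive quadratic form
(`⟨C y, y⟩ ≤ 0` for every `y ∈ ℝ^m`) and nonnegative off-diagonal entries,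
then the only possible complex eigenvalue of `C` on the imaginary axis is `0`. -/
theorem eigenvalue_on_imaginary_axis_eq_zero
    (m : ℕ) (hm : 1 ≤ m) (C : Matrix (Fin m) (Fin m) ℝ)
    (hC : ∀ y : Fin m → ℝ, C.mulVec y ⬝ᵥ y ≤ 0)
    (hoff : ∀ i j : Fin m, i ≠ j → 0 ≤ C i j) :
    ∀ lam : ℂ, lam ∈ spectrum ℂ (C.map (Complex.ofReal)) → lam.re = 0 → lam = 0 := by
  intro lam hmem hre
  set A := C.map (Complex.ofReal) with hA
  -- obtain an eigenvector
  have hev : Module.End.HasEigenvalue (Matrix.toLin' A) lam := by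
    rw [Module.End.hasEigenvalue_iff_mem_spectrum]
    show lam ∈ spectrum ℂ (Matrix.toLinAlgEquiv' A)
    rw [AlgEquiv.spectrum_eq Matrix.toLinAlgEquiv' A]
    exact hmem
  obtain ⟨z, hz⟩ := hev.exists_hasEigenvector
  have hz0 : z ≠ 0 := hz.2
  have hzeq : A.mulVec z = lam • z := by
    have := hz.apply_eq_smul
    rwa [Matrix.toLin'_apply] at this
  -- componentwise eigen-equation
  have hcomp : ∀ i, ∑ j, (C i j : ℂ) * z j = lam * z i := by
    intro i
    have := congrFun hzeq i
    simpa [hA, Matrix.mulVec, dotProduct, Matrix.map_apply] using this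
  -- it suffices to show the imaginary part vanishes
  have him : lam.im = 0 := by
    by_contra him
    set w : Fin m → ℝ := fun i => ‖z i‖ with hw
    have hwnn : ∀ i, 0 ≤ w i := fun i => norm_nonneg _
    set c : Fin m → ℝ := fun i => C i i + Real.sqrt (lam.im ^ 2 + (C i i) ^ 2) with hc
    -- key pointwise bound
    have key : ∀ i, c i * w i ≤ C.mulVec w i := by
      intro i
      have h1 : ∑ j ∈ Finset.univ.erase i, (C i j : ℂ) * z j = (lam - C i i) * z i := by
        have := Finset.add_sum_erase Finset.univ (fun j => (C i j : ℂ) * z j)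
          (Finset.mem_univ i)
        rw [hcomp i] at this
        have : ∑ j ∈ Finset.univ.erase i, (C i j : ℂ) * z j
            = lam * z i - (C i i : ℂ) * z i := by linear_combination this
        rw [this]; ring
      have h2 : ‖(lam - C i i) * z i‖
          ≤ ∑ j ∈ Finset.univ.erase i, C i j * w j := by
        rw [← h1]
        refine le_trans (norm_sum_le _ _) (le_of_eq ?_)
        refine Finset.sum_congr rfl fun j hj => ?_
        rw [norm_mul, Complex.norm_real, Real.norm_eq_abs,
          abs_of_nonneg (hoff i j (Finset.ne_of_mem_erase hj).symm)]
      have h3 : ‖lam - C i i‖ = Real.sqrt (lam.im ^ 2 + (C i i) ^ 2) := by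
        rw [Complex.norm_def, Complex.normSq_apply]
        congr 1
        simp [Complex.sub_re, Complex.sub_im, hre]
        ring
      have h4 : C.mulVec w i = C i i * w i + ∑ j ∈ Finset.univ.erase i, C i j * w j := by
        simp only [Matrix.mulVec, dotProduct]
        rw [← Finset.add_sum_erase Finset.univ (fun j => C i j * w j) (Finset.mem_univ i)]
      rw [h4]
      simp only [hc]
      have : Real.sqrt (lam.im ^ 2 + (C i i) ^ 2) * w i
          ≤ ∑ j ∈ Finset.univ.erase i, C i j * w j := by
        calc Real.sqrt (lam.im ^ 2 + (C i i) ^ 2) * w i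
            = ‖(lam - C i i) * z i‖ := by rw [norm_mul, h3, hw]
          _ ≤ _ := h2
      nlinarith [this]
    -- nonnegativity of the coefficients
    have hcnn : ∀ i, 0 ≤ c i := by
      intro i
      have : |C i i| ≤ Real.sqrt (lam.im ^ 2 + (C i i) ^ 2) := by
        rw [← Real.sqrt_sq_eq_abs]
        exact Real.sqrt_le_sqrt (by nlinarith)
      have := neg_abs_le (C i i)
      simp only [hc]
      linarith
    -- strict positivity at an index where z is nonzero
    obtain ⟨i0, hi0⟩ := Function.ne_iff.mp hz0
    have hwi0 : 0 < w i0 := by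
      simpa [hw] using norm_pos_iff.mpr (by simpa using hi0)
    have hci0 : 0 < c i0 := by
      have : |C i0 i0| < Real.sqrt (lam.im ^ 2 + (C i0 i0) ^ 2) := by
        rw [← Real.sqrt_sq_eq_abs]
        refine Real.sqrt_lt_sqrt (sq_nonneg _) ?_
        have : 0 < lam.im ^ 2 := by positivity
        linarith
      have := neg_abs_le (C i0 i0)
      simp only [hc]
      linarith
    -- derive contradiction with the quadratic form
    have hsum : 0 < ∑ i, c i * w i * w i := by
      refine Finset.sum_pos'
        (fun i _ => mul_nonneg (mul_nonneg (hcnn i) (hwnn i)) (hwnn i))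
        ⟨i0, Finset.mem_univ i0, mul_pos (mul_pos hci0 hwi0) hwi0⟩
    have hle : ∑ i, c i * w i * w i ≤ C.mulVec w ⬝ᵥ w := by
      simp only [dotProduct]
      exact Finset.sum_le_sum fun i _ =>
        mul_le_mul_of_nonneg_right (key i) (hwnn i)
    have := hC w
    linarith
  exact Complex.ext hre him
end

section
/- Let m ≥ 1 and let V be a linear subspace of ℝ^m with the property that every nonzero vector v ∈ V has either all components strictly positive or all components strictly negative. Then V has dimension at most one. -/
/-- If every nonzero vector of a subspace `V ⊆ ℝ^m` (`m ≥ 1`) has either all components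
strictly positive or all components strictly negative, then `dim V ≤ 1`. -/
theorem finrank_le_one_of_signed_components
    (m : ℕ) (hm : 1 ≤ m) (V : Submodule ℝ (Fin m → ℝ))
    (hV : ∀ v ∈ V, v ≠ 0 → (∀ i, 0 < v i) ∨ (∀ i, v i < 0)) :
    Module.finrank ℝ V ≤ 1 := by
  set i0 : Fin m := ⟨0, hm⟩
  by_cases hbot : V = ⊥
  · subst hbot
    simp
  · obtain ⟨v, hvV, hv0⟩ := Submodule.exists_mem_ne_zero_of_ne_bot hbot
    have hvi0 : v i0 ≠ 0 := by
      rcases hV v hvV hv0 with h | h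
      · exact ne_of_gt (h i0)
      · exact ne_of_lt (h i0)
    apply finrank_le_one (⟨v, hvV⟩ : V)
    intro ⟨w, hwV⟩
    refine ⟨w i0 / v i0, ?_⟩
    have key : v i0 • w - w i0 • v = 0 := by
      by_contra hne
      have hmem : v i0 • w - w i0 • v ∈ V :=
        V.sub_mem (V.smul_mem _ hwV) (V.smul_mem _ hvV)
      have hz : (v i0 • w - w i0 • v) i0 = 0 := by
        simp [smul_eq_mul]
        ring
      rcases hV _ hmem hne with h | h
      · exact absurd hz (ne_of_gt (h i0))
      · exact absurd hz (ne_of_lt (h i0))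
    ext j
    have hj : v i0 * w j - w i0 * v j = 0 := by
      have := congrFun key j
      simpa [smul_eq_mul] using this
    show (w i0 / v i0) * v j = w j
    field_simp
    linarith
end

section
/- Let m ≥ 1, let X be a nonempty set and, for each x ∈ X, let C(x) be a real m×m matrix whose off-diagonal entries are nonnegative (C(x)_{ij} ≥ 0 for all x ∈ X and all i ≠ j). Assume there is no subset K of {1, …, m} with ∅ ≠ K ≠ {1, …, m} such that C(x)_{ij} = 0 for every x ∈ X, every i ∈ K and every j ∉ K. Then every nonzero vector η ∈ ℝ^m with nonnegative components satisfying C(x) η = 0 for every x ∈ X has all components strictly positive. -/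
open Matrix

/-- Let `C x` (`x ∈ X`, `X` nonempty) be real `m × m` matrices (`m ≥ 1`) with nonnegative
off-diagonal entries, and assume there is no nontrivial set `K ⊆ {1,…,m}` such that
`C x i j = 0` for all `x`, all `i ∈ K` and all `j ∉ K`. Then every nonzero vector
`η ∈ ℝ^m` with nonnegative components satisfying `C x η = 0` for every `x` has all
components strictly positive. -/
theorem pos_components_of_nonneg_kernel_vector
    (m : ℕ) (hm : 1 ≤ m) (X : Type*) [Nonempty X]
    (C : X → Matrix (Fin m) (Fin m) ℝ)
    (hoff : ∀ x : X, ∀ i j : Fin m, i ≠ j → 0 ≤ C x i j)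
    (hirr : ¬ ∃ K : Set (Fin m), K.Nonempty ∧ K ≠ Set.univ ∧
      ∀ x : X, ∀ i ∈ K, ∀ j ∉ K, C x i j = 0)
    (η : Fin m → ℝ) (hη : η ≠ 0) (hnonneg : ∀ i, 0 ≤ η i)
    (hker : ∀ x : X, (C x).mulVec η = 0) :
    ∀ i, 0 < η i := by
  by_contra h
  push_neg at h
  obtain ⟨i0, hi0⟩ := h
  set K : Set (Fin m) := {i | η i = 0} with hK
  have hi0K : i0 ∈ K := le_antisymm hi0 (hnonneg i0)
  apply hirr
  refine ⟨K, ⟨i0, hi0K⟩, ?_, ?_⟩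
  · intro hKuniv
    apply hη
    funext j
    have : j ∈ K := hKuniv ▸ Set.mem_univ j
    exact this
  · intro x i hiK j hjK
    have hsum : ∑ k, C x i k * η k = 0 := by
      have := congrFun (hker x) i
      simpa [Matrix.mulVec, dotProduct] using this
    have hterm : ∀ k ∈ Finset.univ, 0 ≤ C x i k * η k := by
      intro k _
      by_cases hk : k = i
      · subst hk
        have : η k = 0 := hiK
        simp [this]
      · exact mul_nonneg (hoff x i k (Ne.symm hk)) (hnonneg k)
    have hzero : ∀ k ∈ Finset.univ, C x i k * η k = 0 :=
      (Finset.sum_eq_zero_iff_of_nonneg hterm).mp hsum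
    have := hzero j (Finset.mem_univ j)
    have hηj : η j ≠ 0 := hjK
    exact (mul_eq_zero.mp this).resolve_right hηj
end

section
/- Let m ≥ 1 and let C be a real m×m matrix whose diagonal entries are negative, whose off-diagonal entries are positive, and such that the sum of the entries of each row and the sum of the entries of each column are both zero (∑_j C_{ij} = 0 for every i and ∑_i C_{ij} = 0 for every j). Then ⟨C y, y⟩ ≤ 0 for every y ∈ ℝ^m. -/
open Matrix

/-- If `C` is a real `m × m` matrix (`m ≥ 1`) with negative diagonal entries, positive
off-diagonal entries, and all row sums and column sums equal to zero, then the quadratic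
form of `C` is nonpositive: `⟨C y, y⟩ ≤ 0` for every `y ∈ ℝ^m`. -/
theorem quadratic_form_nonpos_of_zero_row_col_sums
    (m : ℕ) (hm : 1 ≤ m) (C : Matrix (Fin m) (Fin m) ℝ)
    (hdiag : ∀ i, C i i < 0) (hoff : ∀ i j : Fin m, i ≠ j → 0 < C i j)
    (hrow : ∀ i, ∑ j, C i j = 0) (hcol : ∀ j, ∑ i, C i j = 0) :
    ∀ y : Fin m → ℝ, C.mulVec y ⬝ᵥ y ≤ 0 := by
  intro y
  have h1 : C.mulVec y ⬝ᵥ y = ∑ i, ∑ j, C i j * y j * y i := by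
    simp [dotProduct, mulVec, Finset.sum_mul]
  have hA : ∑ i, ∑ j, C i j * y i ^ 2 = 0 := by
    simp only [← Finset.sum_mul, hrow, zero_mul, Finset.sum_const_zero]
  have hB : ∑ i : Fin m, ∑ j, C i j * y j ^ 2 = 0 := by
    rw [Finset.sum_comm]
    simp only [← Finset.sum_mul, hcol, zero_mul, Finset.sum_const_zero]
  have key : ∑ i, ∑ j, C i j * (y i - y j) ^ 2 = -2 * (C.mulVec y ⬝ᵥ y) := by
    have h2 : ∀ i, ∑ j, C i j * (y i - y j) ^ 2
        = (∑ j, C i j * y i ^ 2) - 2 * (∑ j, C i j * y j * y i) + ∑ j, C i j * y j ^ 2 := by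
      intro i
      rw [Finset.mul_sum, ← Finset.sum_sub_distrib, ← Finset.sum_add_distrib]
      exact Finset.sum_congr rfl fun j _ => by ring
    simp_rw [h2, Finset.sum_add_distrib, Finset.sum_sub_distrib, ← Finset.mul_sum]
    rw [hA, hB, ← h1]
    ring
  have hpos : 0 ≤ ∑ i, ∑ j, C i j * (y i - y j) ^ 2 := by
    refine Finset.sum_nonneg fun i _ => Finset.sum_nonneg fun j _ => ?_
    rcases eq_or_ne i j with rfl | h
    · simp
    · exact mul_nonneg (hoff i j h).le (sq_nonneg _)
  linarith [key ▸ hpos]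
end

section
/- Let d ≥ 1, let Q⁰ be a constant symmetric positive definite d×d real matrix, let γ ≥ 0, b₀ > 0 and β > max(γ − 1, 0). Define Q(x) = (1+|x|²)^γ Q⁰, b(x) = −b₀ x (1+|x|²)^β and φ(x) = 1+|x|² for x ∈ ℝ^d. Then for every x ∈ ℝ^d one has Tr(Q(x) D²φ(x)) + ⟨b(x), ∇φ(x)⟩ = 2 φ(x) [(1+|x|²)^{γ−1} Tr Q⁰ − b₀ |x|² (1+|x|²)^{β−1}], and there exist constants a > 0 and c > 0 such that Tr(Q(x) D²φ(x)) + ⟨b(x), ∇φ(x)⟩ ≤ a − c φ(x) for every x ∈ ℝ^d. -/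
open Matrix
open scoped RealInnerProductSpace

/-- The Lyapunov function `φ(x) = 1 + |x|²` on `ℝ^d`. -/
noncomputable def lyapunovPhi (d : ℕ) (x : EuclideanSpace ℝ (Fin d)) : ℝ := 1 + ‖x‖ ^ 2

/-- The Hessian matrix `D²φ(x)` of `φ(x) = 1 + |x|²`, with entries the second partial
derivatives `∂²φ/∂xᵢ∂xⱼ (x)`. -/
noncomputable def lyapunovHessian (d : ℕ) (x : EuclideanSpace ℝ (Fin d)) :
    Matrix (Fin d) (Fin d) ℝ := fun i j =>
  fderiv ℝ (fun y => fderiv ℝ (lyapunovPhi d) y (EuclideanSpace.single j 1)) x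
    (EuclideanSpace.single i 1)

lemma phi_hasFDerivAt (d : ℕ) (y : EuclideanSpace ℝ (Fin d)) :
    HasFDerivAt (lyapunovPhi d) ((2:ℝ) • innerSL ℝ y) y := by
  have h := (hasStrictFDerivAt_norm_sq y).hasFDerivAt.const_add (1:ℝ)
  have e : ((2:ℕ) • innerSL ℝ y : EuclideanSpace ℝ (Fin d) →L[ℝ] ℝ) = (2:ℝ) • innerSL ℝ y := by
    ext v; simp
  rw [e] at h
  exact h

lemma phi_gradient (d : ℕ) (x : EuclideanSpace ℝ (Fin d)) :
    gradient (lyapunovPhi d) x = (2:ℝ) • x := by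
  have h : HasGradientAt (lyapunovPhi d) ((2:ℝ) • x) x := by
    rw [hasGradientAt_iff_hasFDerivAt]
    have e : (InnerProductSpace.toDual ℝ _ ((2:ℝ) • x) : EuclideanSpace ℝ (Fin d) →L[ℝ] ℝ)
        = (2:ℝ) • innerSL ℝ x := by
      ext y
      simp [real_inner_smul_left]
    rw [e]
    exact phi_hasFDerivAt d x
  exact h.gradient

lemma phi_hessian (d : ℕ) (x : EuclideanSpace ℝ (Fin d)) :
    lyapunovHessian d x = (2:ℝ) • (1 : Matrix (Fin d) (Fin d) ℝ) := by
  funext i j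
  have h1 : (fun y : EuclideanSpace ℝ (Fin d) =>
      fderiv ℝ (lyapunovPhi d) y (EuclideanSpace.single j 1))
      = fun y => ((2:ℝ) • innerSL ℝ (EuclideanSpace.single j (1:ℝ))) y := by
    funext y
    rw [(phi_hasFDerivAt d y).fderiv]
    simp [real_inner_comm]
  show fderiv ℝ (fun y => fderiv ℝ (lyapunovPhi d) y (EuclideanSpace.single j 1)) x
      (EuclideanSpace.single i 1) = _
  rw [h1, ContinuousLinearMap.fderiv]
  simp [EuclideanSpace.inner_single_left, EuclideanSpace.single_apply, Matrix.one_apply,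
    eq_comm]


lemma lyapunov_scalar_bound (γ b₀ β T : ℝ) (hγ : 0 ≤ γ) (hb : 0 < b₀)
    (hβ0 : 0 < β) (hδ : 0 < β + 1 - γ) (hT : 0 < T) :
    ∃ a > (0:ℝ), ∀ s : ℝ, 1 ≤ s → 2 * s ^ γ * T - 2 * b₀ * s ^ β * (s - 1) ≤ a - b₀ * s := by
  set S : ℝ := max 2 (max ((2:ℝ) ^ (1/β)) ((4*T/b₀) ^ (1/(β+1-γ)))) with hSdef
  have hS2 : (2:ℝ) ≤ S := le_max_left _ _
  have hS0 : (0:ℝ) < S := by linarith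
  refine ⟨2*T*S^γ + b₀*S, by positivity, fun s hs1 => ?_⟩
  have hs0 : (0:ℝ) < s := by linarith
  rcases le_or_gt s S with hcase | hcase
  · have e1 : s ^ γ ≤ S ^ γ := Real.rpow_le_rpow (le_of_lt hs0) hcase hγ
    have e2 : 0 ≤ 2*b₀*s^β*(s-1) := by
      have h1 : (0:ℝ) ≤ s^β := Real.rpow_nonneg (le_of_lt hs0) β
      have h2 : (0:ℝ) ≤ s - 1 := by linarith
      nlinarith [mul_nonneg (mul_nonneg hb.le h1) h2]
    have f1 : 0 ≤ T * (S^γ - s^γ) := mul_nonneg hT.le (by linarith)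
    have f2 : 0 ≤ b₀ * (S - s) := mul_nonneg hb.le (by linarith)
    nlinarith [f1, f2, e2]
  · have hSs : S ≤ s := le_of_lt hcase
    have h2s : (2:ℝ) ≤ s := le_trans hS2 hSs
    have pβ : (2:ℝ) ≤ s ^ β := by
      have h1 : ((2:ℝ) ^ (1/β)) ≤ s := le_trans (le_trans (le_max_left _ _) (le_max_right _ _)) hSs
      have h2 : ((2:ℝ) ^ (1/β)) ^ β ≤ s ^ β :=
        Real.rpow_le_rpow (by positivity) h1 (le_of_lt hβ0)
      rwa [← Real.rpow_mul (by norm_num), one_div,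
        inv_mul_cancel₀ (ne_of_gt hβ0), Real.rpow_one] at h2
    have pδ : 4*T/b₀ ≤ s ^ (β+1-γ) := by
      have h1 : ((4*T/b₀:ℝ) ^ (1/(β+1-γ))) ≤ s :=
        le_trans (le_trans (le_max_right _ _) (le_max_right _ _)) hSs
      have h2 : ((4*T/b₀:ℝ) ^ (1/(β+1-γ))) ^ (β+1-γ) ≤ s ^ (β+1-γ) :=
        Real.rpow_le_rpow (Real.rpow_nonneg (by positivity) _) h1 (le_of_lt hδ)
      rwa [← Real.rpow_mul (by positivity), one_div,
        inv_mul_cancel₀ (ne_of_gt hδ), Real.rpow_one] at h2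
    have e1 : s ^ β * s = s ^ (β+1) := by
      rw [Real.rpow_add hs0, Real.rpow_one]
    have e2 : s ^ γ * s ^ (β+1-γ) = s ^ (β+1) := by
      rw [← Real.rpow_add hs0]; congr 1; ring
    have hsγ : (0:ℝ) < s ^ γ := Real.rpow_pos_of_pos hs0 γ
    have hsβ : (0:ℝ) < s ^ β := Real.rpow_pos_of_pos hs0 β
    have ha : 0 < 2*T*S^γ + b₀*S := by positivity
    have k1 : b₀*s ≤ (b₀/2) * s^(β+1) := by
      rw [← e1]
      have : 0 ≤ (b₀/2) * s * (s^β - 2) :=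
        mul_nonneg (mul_nonneg (by linarith) hs0.le) (by linarith)
      nlinarith
    have k2 : 2*T*s^γ ≤ (b₀/2) * s^(β+1) := by
      rw [← e2]
      have hpos : 0 ≤ (b₀/2) * s^γ := mul_nonneg (by linarith) hsγ.le
      have hstep := mul_le_mul_of_nonneg_left pδ hpos
      calc 2*T*s^γ = (b₀/2) * s^γ * (4*T/b₀) := by
            field_simp
            ring
        _ ≤ (b₀/2) * s^γ * s^(β+1-γ) := by linarith [hstep]
        _ = b₀/2 * (s^γ * s^(β+1-γ)) := by ring
    have k3 : b₀ * s^(β+1) ≤ 2*b₀*(s-1)*s^β := by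
      rw [← e1]
      have : 0 ≤ b₀ * s^β * (2*(s-1) - s) :=
        mul_nonneg (mul_nonneg hb.le hsβ.le) (by linarith)
      nlinarith
    linarith [k1, k2, k3, ha]

set_option maxHeartbeats 1000000 in
/-- For `Q(x) = (1+|x|²)^γ Q⁰` (`Q⁰` symmetric positive definite, `γ ≥ 0`),
`b(x) = -b₀ x (1+|x|²)^β` (`b₀ > 0`, `β > max(γ-1, 0)`) and `φ(x) = 1+|x|²`, one has
`Tr(Q(x) D²φ(x)) + ⟨b(x), ∇φ(x)⟩ = 2 φ(x) [(1+|x|²)^{γ-1} Tr Q⁰ - b₀ |x|² (1+|x|²)^{β-1}]`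
for every `x ∈ ℝ^d`, and there exist `a, c > 0` with
`Tr(Q(x) D²φ(x)) + ⟨b(x), ∇φ(x)⟩ ≤ a - c φ(x)` on `ℝ^d`. -/
theorem lyapunov_condition_for_polynomial_coefficients
    (d : ℕ) (hd : 1 ≤ d) (Q0 : Matrix (Fin d) (Fin d) ℝ)
    (hsym : Q0.IsSymm) (hpd : Q0.PosDef) (γ b₀ β : ℝ)
    (hγ : 0 ≤ γ) (hb : 0 < b₀) (hβ : max (γ - 1) 0 < β) :
    (∀ x : EuclideanSpace ℝ (Fin d),
      (((1 + ‖x‖ ^ 2) ^ γ • Q0) * lyapunovHessian d x).trace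
          + ⟪(-(b₀ * (1 + ‖x‖ ^ 2) ^ β)) • x, gradient (lyapunovPhi d) x⟫
        = 2 * lyapunovPhi d x * ((1 + ‖x‖ ^ 2) ^ (γ - 1) * Q0.trace
            - b₀ * ‖x‖ ^ 2 * (1 + ‖x‖ ^ 2) ^ (β - 1))) ∧
    ∃ a > (0 : ℝ), ∃ c > (0 : ℝ), ∀ x : EuclideanSpace ℝ (Fin d),
      (((1 + ‖x‖ ^ 2) ^ γ • Q0) * lyapunovHessian d x).trace
          + ⟪(-(b₀ * (1 + ‖x‖ ^ 2) ^ β)) • x, gradient (lyapunovPhi d) x⟫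
        ≤ a - c * lyapunovPhi d x := by
  have key : ∀ x : EuclideanSpace ℝ (Fin d),
      (((1 + ‖x‖ ^ 2) ^ γ • Q0) * lyapunovHessian d x).trace
        + ⟪(-(b₀ * (1 + ‖x‖ ^ 2) ^ β)) • x, gradient (lyapunovPhi d) x⟫
      = 2 * (1 + ‖x‖ ^ 2) ^ γ * Q0.trace
        - 2 * b₀ * (1 + ‖x‖ ^ 2) ^ β * ‖x‖ ^ 2 := by
    intro x
    rw [phi_hessian, phi_gradient]
    rw [real_inner_smul_left, real_inner_smul_right, real_inner_self_eq_norm_sq]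
    have h2 : ((1 + ‖x‖ ^ 2) ^ γ • Q0) * ((2:ℝ) • (1 : Matrix (Fin d) (Fin d) ℝ))
        = ((2:ℝ) * (1 + ‖x‖ ^ 2) ^ γ) • Q0 := by
      rw [Matrix.smul_mul, Matrix.mul_smul, Matrix.mul_one, smul_smul, mul_comm]
    rw [h2, Matrix.trace_smul]
    simp only [smul_eq_mul]
    ring
  have hs : ∀ x : EuclideanSpace ℝ (Fin d), (0:ℝ) < 1 + ‖x‖ ^ 2 := fun x => by positivity
  have hβ0 : 0 < β := lt_of_le_of_lt (le_max_right _ _) hβ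
  have hδ : 0 < β + 1 - γ := by
    have := lt_of_le_of_lt (le_max_left (γ - 1) 0) hβ
    linarith
  -- trace positivity
  have hT : 0 < Q0.trace := by
    have : Nonempty (Fin d) := ⟨⟨0, hd⟩⟩
    have hdiag : ∀ i : Fin d, 0 < Q0 i i := by
      intro i
      have h := hpd.dotProduct_mulVec_pos (x := Pi.single i 1) (by
        intro h
        have := congrFun h i
        simp at this)
      simpa [Matrix.mulVec, dotProduct, Pi.single_apply] using h
    have : 0 < ∑ i, Q0 i i := Finset.sum_pos (fun i _ => hdiag i) Finset.univ_nonempty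
    simpa [Matrix.trace, Matrix.diag] using this
  set T := Q0.trace with hTdef
  constructor
  · intro x
    rw [key x]
    have hsx := hs x
    have h1 : (1 + ‖x‖ ^ 2) ^ (γ - 1) = (1 + ‖x‖ ^ 2) ^ γ / (1 + ‖x‖ ^ 2) := by
      rw [Real.rpow_sub hsx, Real.rpow_one]
    have h2 : (1 + ‖x‖ ^ 2) ^ (β - 1) = (1 + ‖x‖ ^ 2) ^ β / (1 + ‖x‖ ^ 2) := by
      rw [Real.rpow_sub hsx, Real.rpow_one]
    rw [h1, h2, lyapunovPhi]
    field_simp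
  · -- existence of a, c
    obtain ⟨a, ha, hbound⟩ := lyapunov_scalar_bound γ b₀ β T hγ hb hβ0 hδ hT
    refine ⟨a, ha, b₀, hb, fun x => ?_⟩
    rw [key x, lyapunovPhi]
    have h1 : (1:ℝ) ≤ 1 + ‖x‖ ^ 2 := by linarith [sq_nonneg ‖x‖]
    have := hbound (1 + ‖x‖ ^ 2) h1
    linarith [this]
end

section
/- Let n ≥ 1 and let M be an n×n complex matrix all of whose eigenvalues have strictly negative real part. Then there exist constants K > 0 and ε > 0 such that ‖exp(t M)‖ ≤ K e^{−ε t} for every t ≥ 0; in particular exp(t M) tends to the zero matrix as t → +∞. -/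
open Matrix Filter
open scoped Nat

attribute [local instance] Matrix.normedAddCommGroup

open NormedSpace in
private lemma aux_exp_smul_one (n : ℕ) (c : ℂ) :
    NormedSpace.exp (c • (1 : Matrix (Fin n) (Fin n) ℂ)) =
      Complex.exp c • (1 : Matrix (Fin n) (Fin n) ℂ) := by
  letI : SeminormedRing (Matrix (Fin n) (Fin n) ℂ) := Matrix.linftyOpSemiNormedRing
  letI : NormedRing (Matrix (Fin n) (Fin n) ℂ) := Matrix.linftyOpNormedRing
  letI : NormedAlgebra ℂ (Matrix (Fin n) (Fin n) ℂ) := Matrix.linftyOpNormedAlgebra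
  rw [← Algebra.algebraMap_eq_smul_one (R := ℂ) (A := Matrix (Fin n) (Fin n) ℂ)]
  have h := NormedSpace.algebraMap_exp_comm (𝔸 := Matrix (Fin n) (Fin n) ℂ) c
  rw [← Complex.exp_eq_exp_ℂ, Algebra.algebraMap_eq_smul_one] at h
  exact h.symm

private lemma aux_expSeries_summable (n : ℕ) (A : Matrix (Fin n) (Fin n) ℂ) :
    Summable fun k : ℕ => ((k ! : ℂ))⁻¹ • A ^ k := by
  letI : SeminormedRing (Matrix (Fin n) (Fin n) ℂ) := Matrix.linftyOpSemiNormedRing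
  letI : NormedRing (Matrix (Fin n) (Fin n) ℂ) := Matrix.linftyOpNormedRing
  letI : NormedAlgebra ℂ (Matrix (Fin n) (Fin n) ℂ) := Matrix.linftyOpNormedAlgebra
  exact @NormedSpace.expSeries_summable' ℂ _ _ _ _ _ _ (FiniteDimensional.complete ℂ _) A

private lemma aux_exp_mulVec (n : ℕ) (M : Matrix (Fin n) (Fin n) ℂ) (μ : ℂ) (v : Fin n → ℂ)
    (hv : ((M - μ • 1) ^ n) *ᵥ v = 0) (t : ℝ) :
    NormedSpace.exp (t • M) *ᵥ v =
      Complex.exp (t * μ) •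
        ∑ k ∈ Finset.range n, (((t : ℂ) ^ k * ((k ! : ℂ))⁻¹) • ((M - μ • 1) ^ k *ᵥ v)) := by
  have hreal : ∀ (A : Matrix (Fin n) (Fin n) ℂ), t • A = (t : ℂ) • A := by
    intro A; ext i j; simp [Matrix.smul_apply, Complex.real_smul]
  set N : Matrix (Fin n) (Fin n) ℂ := M - μ • 1 with hN
  have hsplit : t • M = ((t : ℂ) * μ) • (1 : Matrix (Fin n) (Fin n) ℂ) + (t : ℂ) • N := by
    rw [hreal, hN, smul_sub, smul_smul]
    abel
  have hcomm : Commute (((t : ℂ) * μ) • (1 : Matrix (Fin n) (Fin n) ℂ)) ((t : ℂ) • N) :=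
    (((Commute.one_left _).smul_left _).smul_right _)
  rw [hsplit, Matrix.exp_add_of_commute _ _ hcomm, aux_exp_smul_one, smul_mul_assoc, one_mul,
    Matrix.smul_mulVec]
  congr 1
  -- now compute `exp ℂ ((t:ℂ) • N) *ᵥ v`
  have hzero : ∀ k : ℕ, n ≤ k → N ^ k *ᵥ v = 0 := by
    intro k hk
    have : N ^ k = N ^ (k - n) * N ^ n := by
      rw [← pow_add]
      congr 1
      omega
    rw [this, ← Matrix.mulVec_mulVec, hv, Matrix.mulVec_zero]
  let L : Matrix (Fin n) (Fin n) ℂ →ₗ[ℂ] (Fin n → ℂ) :=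
    { toFun := fun A => A *ᵥ v
      map_add' := fun A B => Matrix.add_mulVec A B v
      map_smul' := fun c A => Matrix.smul_mulVec c A v }
  have hLc : Continuous L := L.continuous_of_finiteDimensional
  have key : NormedSpace.exp ((t : ℂ) • N) *ᵥ v =
      ∑' k : ℕ, ((k ! : ℂ))⁻¹ • (((t : ℂ) • N) ^ k *ᵥ v) := by
    have h := (⟨L, hLc⟩ : Matrix (Fin n) (Fin n) ℂ →L[ℂ] (Fin n → ℂ)).map_tsum
      (aux_expSeries_summable n ((t : ℂ) • N))
    rw [NormedSpace.exp_eq_tsum (𝕂 := ℂ)]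
    refine Eq.trans ?_ (h.trans ?_)
    · rfl
    · apply tsum_congr
      intro k
      show (((k ! : ℂ))⁻¹ • ((t : ℂ) • N) ^ k) *ᵥ v = _
      rw [Matrix.smul_mulVec]
  rw [key]
  have hterm : ∀ k : ℕ, ((k ! : ℂ))⁻¹ • (((t : ℂ) • N) ^ k *ᵥ v)
      = ((t : ℂ) ^ k * ((k ! : ℂ))⁻¹) • (N ^ k *ᵥ v) := by
    intro k
    rw [smul_pow, Matrix.smul_mulVec, smul_smul, mul_comm]
  simp only [hterm]
  exact tsum_eq_sum (by
    intro k hk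
    rw [hzero k (by simpa using hk), smul_zero])

set_option maxHeartbeats 1000000 in
/-- If all the eigenvalues of an `n × n` complex matrix `M` (`n ≥ 1`) have strictly
negative real part, then there exist `K > 0` and `ε > 0` such that
`‖exp(t M)‖ ≤ K e^{-ε t}` for every `t ≥ 0`; in particular `exp(t M) → 0` as `t → +∞`. -/
theorem matrix_exp_decay_of_spectrum_re_neg
    (n : ℕ) (hn : 1 ≤ n) (M : Matrix (Fin n) (Fin n) ℂ)
    (hspec : ∀ lam ∈ spectrum ℂ M, lam.re < 0) :
    (∃ K > (0 : ℝ), ∃ ε > (0 : ℝ), ∀ t : ℝ, 0 ≤ t →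
      ‖NormedSpace.exp (t • M)‖ ≤ K * Real.exp (-ε * t)) ∧
    Tendsto (fun t : ℝ => NormedSpace.exp (t • M)) atTop (nhds 0) := by
  classical
  haveI : Nonempty (Fin n) := ⟨⟨0, hn⟩⟩
  have hmain : ∃ K > (0 : ℝ), ∃ ε > (0 : ℝ), ∀ t : ℝ, 0 ≤ t →
      ‖NormedSpace.exp (t • M)‖ ≤ K * Real.exp (-ε * t) := by
    set e := Matrix.toLinAlgEquiv' (R := ℂ) (n := Fin n) with he
    set f : Module.End ℂ (Fin n → ℂ) := e M with hf
    have hrank : Module.finrank ℂ (Fin n → ℂ) = n := by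
      simp [Module.finrank_fin_fun]
    -- membership in max generalized eigenspace gives vanishing of (M - μ•1)^n *ᵥ v
    have hmem : ∀ (μ : ℂ) (v : Fin n → ℂ), v ∈ f.maxGenEigenspace μ →
        ((M - μ • 1) ^ n) *ᵥ v = 0 := by
      intro μ v hv
      rw [Module.End.maxGenEigenspace_eq_genEigenspace_finrank, hrank,
        Module.End.mem_genEigenspace_nat, LinearMap.mem_ker] at hv
      have hfe : f - μ • 1 = e (M - μ • 1) := by
        rw [hf, map_sub, _root_.map_smul, _root_.map_one]
      rw [hfe, ← map_pow, he, Matrix.toLinAlgEquiv'_apply] at hv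
      exact hv
    -- eigenvalue real parts are negative
    have hneg : ∀ μ : ℂ, f.maxGenEigenspace μ ≠ ⊥ → μ.re < 0 := by
      intro μ hμ
      apply hspec
      rw [← AlgEquiv.spectrum_eq e M, ← hf, ← Module.End.hasEigenvalue_iff_mem_spectrum]
      rw [Module.End.maxGenEigenspace_eq_genEigenspace_finrank] at hμ
      exact Module.End.hasEigenvalue_of_hasGenEigenvalue (k := Module.finrank ℂ (Fin n → ℂ)) hμ
    -- internal direct sum decomposition into max generalized eigenspaces
    have hInt : DirectSum.IsInternal f.maxGenEigenspace :=
      (DirectSum.isInternal_submodule_iff_iSupIndep_and_iSup_eq_top _).mpr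
        ⟨f.independent_maxGenEigenspace, f.iSup_maxGenEigenspace_eq_top⟩
    let b : Module.Basis (Σ μ : ℂ, Fin (Module.finrank ℂ (f.maxGenEigenspace μ))) ℂ (Fin n → ℂ) :=
      hInt.collectedBasis (fun μ => Module.finBasis ℂ (f.maxGenEigenspace μ))
    letI : Fintype (Σ μ : ℂ, Fin (Module.finrank ℂ (f.maxGenEigenspace μ))) :=
      FiniteDimensional.fintypeBasisIndex b
    have hne : Nonempty (Σ μ : ℂ, Fin (Module.finrank ℂ (f.maxGenEigenspace μ))) :=
      b.index_nonempty
    have huniv : (Finset.univ :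
        Finset (Σ μ : ℂ, Fin (Module.finrank ℂ (f.maxGenEigenspace μ)))).Nonempty :=
      Finset.univ_nonempty
    have hEbot : ∀ i : (Σ μ : ℂ, Fin (Module.finrank ℂ (f.maxGenEigenspace μ))),
        f.maxGenEigenspace i.1 ≠ ⊥ := by
      rintro ⟨μ, j⟩ h
      rw [h] at j
      simp only [finrank_bot] at j
      exact j.elim0
    set r : ℝ := Finset.univ.sup' huniv (fun i => (i.1 : ℂ).re) with hr
    have hrneg : r < 0 := by
      rw [hr, Finset.sup'_lt_iff]
      intro i _
      exact hneg i.1 (hEbot i)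
    set δ : ℝ := -r / 2 with hδdef
    have hδpos : 0 < δ := by rw [hδdef]; linarith
    have hre_le : ∀ i : (Σ μ : ℂ, Fin (Module.finrank ℂ (f.maxGenEigenspace μ))),
        (i.1 : ℂ).re ≤ -2 * δ := by
      intro i
      have h1 : (i.1 : ℂ).re ≤ r := by
        rw [hr]
        exact Finset.le_sup' (fun i => (i.1 : ℂ).re) (Finset.mem_univ i)
      rw [hδdef]; linarith
    -- per basis vector decay bound
    set D : (Σ μ : ℂ, Fin (Module.finrank ℂ (f.maxGenEigenspace μ))) → ℝ :=
      fun i => ∑ k ∈ Finset.range n, δ⁻¹ ^ k * ‖(M - i.1 • 1) ^ k *ᵥ (b i)‖ with hD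
    have hDnonneg : ∀ i, 0 ≤ D i := by
      intro i
      apply Finset.sum_nonneg
      intro k _
      positivity
    have hb : ∀ i, ∀ t : ℝ, 0 ≤ t →
        ‖NormedSpace.exp (t • M) *ᵥ b i‖ ≤ D i * Real.exp (-δ * t) := by
      intro i t ht
      have hbmem : (b i : Fin n → ℂ) ∈ f.maxGenEigenspace i.1 := by
        simpa [b] using hInt.collectedBasis_mem (fun μ => Module.finBasis ℂ _) i
      rw [aux_exp_mulVec n M i.1 (b i) (hmem i.1 _ hbmem) t]
      rw [norm_smul]
      have habs : ‖Complex.exp (↑t * i.1)‖ = Real.exp (t * (i.1 : ℂ).re) := by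
        rw [Complex.norm_exp]
        congr 1
        simp [Complex.mul_re]
      rw [habs]
      have hsum : ‖∑ k ∈ Finset.range n, (((t : ℂ) ^ k * ((k ! : ℂ))⁻¹) •
          ((M - i.1 • 1) ^ k *ᵥ b i))‖ ≤ D i * Real.exp (δ * t) := by
        refine le_trans (norm_sum_le _ _) ?_
        rw [hD, Finset.sum_mul]
        apply Finset.sum_le_sum
        intro k _
        rw [norm_smul]
        have hco : ‖(t : ℂ) ^ k * ((k ! : ℂ))⁻¹‖ = t ^ k * ((k ! : ℝ))⁻¹ := by
          rw [norm_mul, norm_pow, norm_inv]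
          simp [Complex.norm_real, abs_of_nonneg ht]
        have hkey : t ^ k * ((k ! : ℝ))⁻¹ ≤ δ⁻¹ ^ k * Real.exp (δ * t) := by
          have h1 : (δ * t) ^ k / (k ! : ℝ) ≤ Real.exp (δ * t) := by
            have h2 := Real.sum_le_exp_of_nonneg (by positivity : (0:ℝ) ≤ δ * t) (k + 1)
            refine le_trans ?_ h2
            apply Finset.single_le_sum (f := fun j => (δ * t) ^ j / (j ! : ℝ))
              (fun j _ => by positivity) (Finset.self_mem_range_succ k)
          have hδk : (0:ℝ) < δ ^ k := by positivity
          have hfk : (0:ℝ) < (k ! : ℝ) := by positivity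
          rw [mul_pow, div_le_iff₀ hfk] at h1
          calc t ^ k * ((k !:ℝ))⁻¹ = t ^ k / (k !:ℝ) := by rw [div_eq_mul_inv]
            _ ≤ Real.exp (δ * t) / δ ^ k := by
                rw [div_le_div_iff₀ hfk hδk]
                nlinarith [h1]
            _ = δ⁻¹ ^ k * Real.exp (δ * t) := by rw [inv_pow]; ring
        calc ‖(t:ℂ)^k * ((k !:ℂ))⁻¹‖ * ‖(M - i.1 • 1) ^ k *ᵥ b i‖
            = (t ^ k * ((k !:ℝ))⁻¹) * ‖(M - i.1 • 1) ^ k *ᵥ b i‖ := by rw [hco]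
          _ ≤ (δ⁻¹ ^ k * Real.exp (δ * t)) * ‖(M - i.1 • 1) ^ k *ᵥ b i‖ := by
              apply mul_le_mul_of_nonneg_right hkey (norm_nonneg _)
          _ = δ⁻¹ ^ k * ‖(M - i.1 • 1) ^ k *ᵥ b i‖ * Real.exp (δ * t) := by ring
      calc Real.exp (t * (i.1:ℂ).re) * ‖∑ k ∈ Finset.range n, (((t : ℂ) ^ k * ((k ! : ℂ))⁻¹) •
              ((M - i.1 • 1) ^ k *ᵥ b i))‖
          ≤ Real.exp (t * (i.1:ℂ).re) * (D i * Real.exp (δ * t)) := by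
            apply mul_le_mul_of_nonneg_left hsum (Real.exp_nonneg _)
        _ = D i * (Real.exp (t * (i.1:ℂ).re) * Real.exp (δ * t)) := by ring
        _ = D i * Real.exp (t * (i.1:ℂ).re + δ * t) := by rw [Real.exp_add]
        _ ≤ D i * Real.exp (-δ * t) := by
            apply mul_le_mul_of_nonneg_left ?_ (hDnonneg i)
            apply Real.exp_le_exp.mpr
            have := hre_le i
            nlinarith
    -- coordinate functionals are bounded
    set KK : (Σ μ : ℂ, Fin (Module.finrank ℂ (f.maxGenEigenspace μ))) → ℝ :=
      fun i => ‖LinearMap.toContinuousLinearMap (b.coord i)‖ with hKK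
    have hcoord : ∀ i, ∀ w : Fin n → ℂ, ‖b.repr w i‖ ≤ KK i * ‖w‖ := by
      intro i w
      have := (LinearMap.toContinuousLinearMap (b.coord i)).le_opNorm w
      simpa [Module.Basis.coord_apply] using this
    set C : ℝ := (∑ i, KK i * D i) + 1 with hC
    have hCpos : 0 < C := by
      have : 0 ≤ ∑ i, KK i * D i := by
        apply Finset.sum_nonneg
        intro i _
        exact mul_nonneg (norm_nonneg _) (hDnonneg i)
      rw [hC]; linarith
    -- vector decay bound
    have hvec : ∀ t : ℝ, 0 ≤ t → ∀ w : Fin n → ℂ,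
        ‖NormedSpace.exp (t • M) *ᵥ w‖ ≤ C * Real.exp (-δ * t) * ‖w‖ := by
      intro t ht w
      have hw : NormedSpace.exp (t • M) *ᵥ w
          = ∑ i, b.repr w i • (NormedSpace.exp (t • M) *ᵥ b i) := by
        conv_lhs => rw [← Module.Basis.sum_repr b w]
        rw [← Matrix.mulVecLin_apply, map_sum]
        simp [Matrix.mulVecLin_apply, Matrix.mulVec_smul]
      rw [hw]
      refine le_trans (norm_sum_le _ _) ?_
      have step : ∀ i, ‖b.repr w i • (NormedSpace.exp (t • M) *ᵥ b i)‖
          ≤ (KK i * D i) * Real.exp (-δ * t) * ‖w‖ := by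
        intro i
        rw [norm_smul]
        calc ‖b.repr w i‖ * ‖NormedSpace.exp (t • M) *ᵥ b i‖
            ≤ (KK i * ‖w‖) * (D i * Real.exp (-δ * t)) := by
              apply mul_le_mul (hcoord i w) (hb i t ht) (norm_nonneg _)
              positivity
          _ = (KK i * D i) * Real.exp (-δ * t) * ‖w‖ := by ring
      refine le_trans (Finset.sum_le_sum fun i _ => step i) ?_
      rw [← Finset.sum_mul, ← Finset.sum_mul]
      have : (∑ i, KK i * D i) ≤ C := by rw [hC]; linarith
      apply mul_le_mul_of_nonneg_right ?_ (norm_nonneg w)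
      exact mul_le_mul_of_nonneg_right this (Real.exp_nonneg _)
    refine ⟨C, hCpos, δ, hδpos, ?_⟩
    intro t ht
    rw [Matrix.norm_le_iff (by positivity)]
    intro i j
    have hentry : NormedSpace.exp (t • M) i j
        = (NormedSpace.exp (t • M) *ᵥ Pi.single j 1) i := by
      simp [Matrix.mulVec_single]
    rw [hentry]
    calc ‖(NormedSpace.exp (t • M) *ᵥ Pi.single j 1) i‖
        ≤ ‖NormedSpace.exp (t • M) *ᵥ Pi.single j 1‖ := norm_le_pi_norm _ i
      _ ≤ C * Real.exp (-δ * t) * ‖(Pi.single j 1 : Fin n → ℂ)‖ := hvec t ht _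
      _ = C * Real.exp (-δ * t) := by
          rw [Pi.norm_single]
          simp
  obtain ⟨K, hK, ε, hε, hbound⟩ := hmain
  refine ⟨⟨K, hK, ε, hε, hbound⟩, ?_⟩
  have h2 : Tendsto (fun t : ℝ => -ε * t) atTop atBot :=
    tendsto_id.const_mul_atTop_of_neg (neg_lt_zero.mpr hε)
  have h1 : Tendsto (fun t : ℝ => K * Real.exp (-ε * t)) atTop (nhds 0) := by
    have := (Real.tendsto_exp_atBot.comp h2).const_mul K
    simpa using this
  apply squeeze_zero_norm' (Eventually.mono (eventually_ge_atTop 0) fun t ht => hbound t ht) h1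
end

section
/- Let m ≥ 1 and let C be a real m×m matrix such that every complex eigenvalue λ of C satisfies either Re λ < 0 or λ = 0. Let η ∈ ℝ^m be such that sup_{t ≥ 0} |exp(t C) η| < +∞. Then exp(t C) η converges to a limit in ℝ^m as t → +∞. -/
open Matrix Filter

section Aux

open Nat

set_option maxHeartbeats 1000000

attribute [local instance] Matrix.linftyOpSemiNormedRing Matrix.linftyOpNormedRing
  Matrix.linftyOpNormedAlgebra

private lemma ratio_tendsto_zero {j n : ℕ} (h : j < n) :
    Tendsto (fun t : ℝ => t ^ j / t ^ n) atTop (nhds 0) := by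
  apply squeeze_zero' (g := fun t : ℝ => t⁻¹)
  · filter_upwards [eventually_ge_atTop (1:ℝ)] with t ht
    positivity
  · filter_upwards [eventually_ge_atTop (1:ℝ)] with t ht
    have h1 : t ^ j ≤ t ^ (n-1) := pow_le_pow_right₀ ht (by omega)
    have h2 : (0:ℝ) < t ^ n := by positivity
    rw [div_le_iff₀ h2]
    calc t ^ j ≤ t ^ (n-1) := h1
      _ = t⁻¹ * t ^ n := by
          have ht0 : t ≠ 0 := by linarith
          field_simp
          rw [← pow_succ]
          congr 1
          omega
  · exact tendsto_inv_atTop_zero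

private lemma coeff_eq_zero_of_bounded {E : Type*} [NormedAddCommGroup E] [NormedSpace ℝ E] :
    ∀ (n : ℕ) (c : ℕ → E) (B : ℝ),
      (∀ᶠ t : ℝ in atTop, ‖∑ j ∈ Finset.range (n+1), t ^ j • c j‖ ≤ B) →
      ∀ j, 1 ≤ j → j ≤ n → c j = 0 := by
  intro n
  induction n with
  | zero => intro c B _ j h1 h2; omega
  | succ n ih =>
    intro c B hB
    have htop : c (n+1) = 0 := by
      have h1 : Tendsto (fun t : ℝ => (t ^ (n+1))⁻¹ • ∑ j ∈ Finset.range (n+2), t ^ j • c j)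
          atTop (nhds ((∑ j ∈ Finset.range (n+1), (0:E)) + c (n+1))) := by
        have heq : ∀ᶠ t : ℝ in atTop,
            (∑ j ∈ Finset.range (n+1), (t ^ j / t ^ (n+1)) • c j) + c (n+1)
              = (t ^ (n+1))⁻¹ • ∑ j ∈ Finset.range (n+2), t ^ j • c j := by
          filter_upwards [eventually_gt_atTop (0:ℝ)] with t ht
          have : ((n:ℕ)+2) = (n+1)+1 := rfl
          rw [this, Finset.sum_range_succ (f := fun j => t ^ j • c j), smul_add,
            Finset.smul_sum]
          congr 1
          · refine Finset.sum_congr rfl fun j _ => ?_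
            rw [smul_smul, div_eq_inv_mul]
          · rw [smul_smul, inv_mul_cancel₀ (by positivity), one_smul]
        refine Tendsto.congr' heq ?_
        apply Tendsto.add_const
        have : Tendsto (fun t : ℝ => ∑ j ∈ Finset.range (n+1), (t ^ j / t ^ (n+1)) • c j)
            atTop (nhds (∑ j ∈ Finset.range (n+1), (0:ℝ) • c j)) := by
          apply tendsto_finset_sum
          intro j hj
          exact (ratio_tendsto_zero (Finset.mem_range.mp hj)).smul_const _
        simpa using this
      have h2 : Tendsto (fun t : ℝ => (t ^ (n+1))⁻¹ • ∑ j ∈ Finset.range (n+2), t ^ j • c j)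
          atTop (nhds 0) := by
        apply squeeze_zero_norm' (a := fun t : ℝ => B * (t ^ (n+1))⁻¹)
        · filter_upwards [hB, eventually_gt_atTop (0:ℝ)] with t hBt ht
          rw [norm_smul, norm_inv, norm_pow, Real.norm_eq_abs, abs_of_pos ht, mul_comm]
          exact mul_le_mul_of_nonneg_right hBt (by positivity)
        · have h3 : Tendsto (fun t : ℝ => (t ^ (n+1))⁻¹) atTop (nhds 0) :=
            (tendsto_pow_atTop (by omega)).inv_tendsto_atTop
          have h4 := h3.const_mul B
          rw [mul_zero] at h4
          exact h4
      have h5 := tendsto_nhds_unique h1 h2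
      rw [Finset.sum_const_zero, zero_add] at h5
      exact h5
    have hB' : ∀ᶠ t : ℝ in atTop, ‖∑ j ∈ Finset.range (n+1), t ^ j • c j‖ ≤ B := by
      filter_upwards [hB] with t ht
      rwa [Finset.sum_range_succ, htop, smul_zero, add_zero] at ht
    intro j h1 h2
    rcases Nat.eq_or_lt_of_le h2 with h | h
    · rw [h]; exact htop
    · exact ih c B hB' j h1 (by omega)

private noncomputable def L2M {m : ℕ} (v : Fin m → ℂ) :
    Matrix (Fin m) (Fin m) ℂ →L[ℂ] (Fin m → ℂ) :=
  LinearMap.toContinuousLinearMap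
    { toFun := fun M => M.mulVec v
      map_add' := fun M N => Matrix.add_mulVec M N v
      map_smul' := fun c M => Matrix.smul_mulVec c M v }

private lemma L2M_apply {m : ℕ} (v : Fin m → ℂ) (M : Matrix (Fin m) (Fin m) ℂ) :
    L2M v M = M.mulVec v := rfl

private lemma exp_smul_mulVec {m : ℕ} (A : Matrix (Fin m) (Fin m) ℂ) (μ : ℂ) (k : ℕ)
    (v : Fin m → ℂ) (hv : ((A - μ • 1) ^ k).mulVec v = 0) (t : ℝ) :
    (NormedSpace.exp ((t : ℂ) • A)).mulVec v =
      ∑ j ∈ Finset.range k,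
        (Complex.exp (t * μ) * (t : ℂ) ^ j * (j ! : ℂ)⁻¹) • ((A - μ • 1) ^ j).mulVec v := by
  set N : Matrix (Fin m) (Fin m) ℂ := A - μ • 1 with hN
  have h1 : (t : ℂ) • A = ((t : ℂ) * μ) • (1 : Matrix (Fin m) (Fin m) ℂ) + (t : ℂ) • N := by
    rw [hN, smul_sub, smul_smul]
    abel
  have hc : Commute (((t : ℂ) * μ) • (1 : Matrix (Fin m) (Fin m) ℂ)) ((t : ℂ) • N) :=
    (Commute.one_left _).smul_left _ |>.smul_right _
  rw [h1, Matrix.exp_add_of_commute _ _ hc]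
  have h2 : NormedSpace.exp (((t : ℂ) * μ) • (1 : Matrix (Fin m) (Fin m) ℂ))
      = Complex.exp (t * μ) • (1 : Matrix (Fin m) (Fin m) ℂ) := by
    have := NormedSpace.algebraMap_exp_comm (𝔸 := Matrix (Fin m) (Fin m) ℂ) ((t : ℂ) * μ)
    rw [Algebra.algebraMap_eq_smul_one, Algebra.algebraMap_eq_smul_one] at this
    rw [Complex.exp_eq_exp_ℂ]
    exact this.symm
  rw [h2, smul_mul_assoc, one_mul]
  have h3 : (NormedSpace.exp ((t : ℂ) • N)).mulVec v =
      ∑ j ∈ Finset.range k, ((t : ℂ) ^ j * (j ! : ℂ)⁻¹) • (N ^ j).mulVec v := by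
    rw [NormedSpace.exp_eq_tsum ℂ]
    have hsum : Summable (fun n : ℕ => (n !⁻¹ : ℂ) • ((t : ℂ) • N) ^ n) :=
      NormedSpace.expSeries_summable' _
    have hmap := (L2M v).map_tsum hsum
    rw [L2M_apply] at hmap
    rw [hmap]
    have hterm : ∀ n : ℕ, L2M v ((n !⁻¹ : ℂ) • ((t : ℂ) • N) ^ n)
        = ((t : ℂ) ^ n * (n ! : ℂ)⁻¹) • (N ^ n).mulVec v := by
      intro n
      rw [L2M_apply, smul_pow, smul_smul, Matrix.smul_mulVec, mul_comm]
    rw [tsum_congr hterm]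
    apply tsum_eq_sum
    intro n hn
    have hkn : k ≤ n := by
      by_contra hlt
      exact hn (Finset.mem_range.mpr (by omega))
    have hz : (N ^ n).mulVec v = 0 := by
      have hpow : N ^ n = N ^ (n - k) * N ^ k := by
        rw [← pow_add]
        congr 1
        omega
      rw [hpow, ← Matrix.mulVec_mulVec, hv, Matrix.mulVec_zero]
    rw [hz, smul_zero]
  rw [Matrix.smul_mulVec, h3, Finset.smul_sum]
  refine Finset.sum_congr rfl fun j _ => ?_
  rw [smul_smul]
  ring_nf

private lemma decomp {m : ℕ} (A : Matrix (Fin m) (Fin m) ℂ) (x : Fin m → ℂ) :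
    ∃ (s : Finset ℂ) (v : ℂ → Fin m → ℂ),
      (∀ μ ∈ s, μ ∈ spectrum ℂ A) ∧
      (∀ μ, ((A - μ • 1) ^ m).mulVec (v μ) = 0) ∧
      x = ∑ μ ∈ s, v μ := by
  set T : Module.End ℂ (Fin m → ℂ) := Matrix.toLinAlgEquiv' A with hT
  have htop : x ∈ ⨆ μ : ℂ, T.maxGenEigenspace μ := by
    rw [Module.End.iSup_maxGenEigenspace_eq_top]
    trivial
  rw [Submodule.mem_iSup_iff_exists_finsupp] at htop
  obtain ⟨f, hf, hsum⟩ := htop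
  have key : ∀ μ : ℂ, ((T - μ • 1) ^ m) (f μ) = 0 := by
    intro μ
    have h1 := hf μ
    rw [Module.End.maxGenEigenspace_eq_genEigenspace_finrank,
      Module.End.mem_genEigenspace_nat] at h1
    simpa [Module.finrank_fin_fun] using h1
  have hmat : ∀ (μ : ℂ) (y : Fin m → ℂ), ((T - μ • 1) ^ m) y = ((A - μ • 1) ^ m).mulVec y := by
    intro μ y
    have h2 : T - μ • 1 = Matrix.toLinAlgEquiv' (A - μ • (1 : Matrix (Fin m) (Fin m) ℂ)) := by
      rw [map_sub, _root_.map_smul, _root_.map_one, hT]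
    rw [h2, ← map_pow, Matrix.toLinAlgEquiv'_apply]
  refine ⟨f.support, fun μ => f μ, ?_, ?_, ?_⟩
  · intro μ hμ
    have hne : f μ ≠ 0 := Finsupp.mem_support_iff.mp hμ
    have hmem : f μ ∈ T.genEigenspace μ m := by
      have h1 := hf μ
      rw [Module.End.maxGenEigenspace_eq_genEigenspace_finrank] at h1
      simpa [Module.finrank_fin_fun] using h1
    have hgev : T.HasGenEigenvalue μ m :=
      Submodule.ne_bot_iff _ |>.mpr ⟨f μ, hmem, hne⟩
    have hev : T.HasEigenvalue μ := Module.End.hasEigenvalue_of_hasGenEigenvalue hgev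
    have hspecT : μ ∈ spectrum ℂ T := hev.mem_spectrum
    rwa [hT, AlgEquiv.spectrum_eq] at hspecT
  · intro μ
    rw [← hmat]
    exact key μ
  · exact hsum.symm

private lemma tendsto_exp_pow_zero {μ : ℂ} (hμ : μ.re < 0) (j : ℕ) :
    Tendsto (fun t : ℝ => Complex.exp (t * μ) * (t : ℂ) ^ j) atTop (nhds 0) := by
  set b : ℝ := -μ.re with hb
  have hb0 : 0 < b := by simp [hb]; linarith
  apply squeeze_zero_norm' (a := fun t : ℝ => (b ^ j)⁻¹ * ((b * t) ^ j * Real.exp (-(b * t))))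
  · filter_upwards [eventually_ge_atTop (0:ℝ)] with t ht
    have : ‖Complex.exp (↑t * μ) * (t : ℂ) ^ j‖ = Real.exp (t * μ.re) * t ^ j := by
      rw [norm_mul, norm_pow, Complex.norm_exp,
        Complex.norm_real, Real.norm_eq_abs, abs_of_nonneg ht, Complex.re_ofReal_mul]
    rw [this]
    have heq : (b ^ j)⁻¹ * ((b * t) ^ j * Real.exp (-(b * t))) = Real.exp (t * μ.re) * t ^ j := by
      rw [mul_pow]
      have hbj : (b ^ j : ℝ) ≠ 0 := by positivity
      have hexp : Real.exp (-(b * t)) = Real.exp (t * μ.re) := by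
        congr 1
        rw [hb]
        ring
      rw [hexp]
      field_simp
    rw [heq]
  · have h1 : Tendsto (fun t : ℝ => b * t) atTop atTop :=
      Tendsto.const_mul_atTop hb0 tendsto_id
    have h2 : Tendsto (fun t : ℝ => (b * t) ^ j * Real.exp (-(b * t))) atTop (nhds 0) :=
      (Real.tendsto_pow_mul_exp_neg_atTop_nhds_zero j).comp h1
    have h3 := h2.const_mul ((b ^ j)⁻¹ : ℝ)
    rw [mul_zero] at h3
    exact h3

end Aux

set_option maxHeartbeats 2000000 in
/-- Let `C` be a real `m × m` matrix (`m ≥ 1`) whose complex eigenvalues `λ` all satisfy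
`Re λ < 0` or `λ = 0`. If `η ∈ ℝ^m` is such that `sup_{t ≥ 0} |exp(t C) η| < ∞`
(Euclidean norm), then `exp(t C) η` converges to a limit in `ℝ^m` as `t → +∞`. -/
theorem matrix_exp_apply_converges_of_bounded
    (m : ℕ) (hm : 1 ≤ m) (C : Matrix (Fin m) (Fin m) ℝ)
    (hspec : ∀ lam : ℂ, lam ∈ spectrum ℂ (C.map (Complex.ofReal)) →
      lam.re < 0 ∨ lam = 0)
    (η : Fin m → ℝ)
    (hbdd : ∃ B : ℝ, ∀ t : ℝ, 0 ≤ t →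
      Real.sqrt (∑ i, ((NormedSpace.exp (t • C)).mulVec η i) ^ 2) ≤ B) :
    ∃ L : Fin m → ℝ,
      Tendsto (fun t : ℝ => (NormedSpace.exp (t • C)).mulVec η) atTop (nhds L) := by
  classical
  letI : SeminormedRing (Matrix (Fin m) (Fin m) ℂ) := Matrix.linftyOpSemiNormedRing
  letI : NormedRing (Matrix (Fin m) (Fin m) ℂ) := Matrix.linftyOpNormedRing
  letI : NormedAlgebra ℂ (Matrix (Fin m) (Fin m) ℂ) := Matrix.linftyOpNormedAlgebra
  letI : NormedAlgebra ℝ (Matrix (Fin m) (Fin m) ℂ) := Matrix.linftyOpNormedAlgebra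
  letI : NormedRing (Matrix (Fin m) (Fin m) ℝ) := Matrix.linftyOpNormedRing
  letI : NormedAlgebra ℝ (Matrix (Fin m) (Fin m) ℝ) := Matrix.linftyOpNormedAlgebra
  obtain ⟨B, hB⟩ := hbdd
  have hB0 : 0 ≤ B := le_trans (Real.sqrt_nonneg _) (hB 0 le_rfl)
  set A : Matrix (Fin m) (Fin m) ℂ := C.map Complex.ofReal with hA
  set ηc : Fin m → ℂ := fun i => ((η i : ℝ) : ℂ) with hηc
  set g : ℝ → (Fin m → ℂ) := fun t => (NormedSpace.exp ((t : ℂ) • A)).mulVec ηc with hg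
  -- transfer from ℝ to ℂ
  have hcoe : ∀ (t : ℝ) (i : Fin m),
      g t i = (((NormedSpace.exp (t • C)).mulVec η i : ℝ) : ℂ) := by
    intro t i
    have hφcont : Continuous (Complex.ofRealHom.mapMatrix :
        Matrix (Fin m) (Fin m) ℝ →+* Matrix (Fin m) (Fin m) ℂ) := by
      apply continuous_matrix
      intro i j
      exact Complex.continuous_ofReal.comp ((continuous_apply j).comp (continuous_apply i))
    letI : NormedAlgebra ℚ (Matrix (Fin m) (Fin m) ℝ) := Matrix.linftyOpNormedAlgebra
    have h1 := NormedSpace.map_exp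
      (Complex.ofRealHom.mapMatrix : Matrix (Fin m) (Fin m) ℝ →+* Matrix (Fin m) (Fin m) ℂ)
      hφcont (t • C)
    have h2 : Complex.ofRealHom.mapMatrix (t • C) = (t : ℂ) • A := by
      ext i j
      simp [RingHom.mapMatrix_apply, Matrix.map_apply, hA]
    have h3 : NormedSpace.exp ((t : ℂ) • A) = NormedSpace.exp ((t : ℂ) • A) :=
      rfl
    rw [h2] at h1
    replace h1 : Complex.ofRealHom.mapMatrix (NormedSpace.exp (t • C)) =
        NormedSpace.exp ((t : ℂ) • A) := h1
    calc g t i = ((NormedSpace.exp (t • C)).map Complex.ofRealHom *ᵥ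
          (Complex.ofRealHom ∘ η)) i := by
          show (NormedSpace.exp ((t : ℂ) • A) *ᵥ ηc) i = _
          rw [← h1, RingHom.mapMatrix_apply]
          rfl
      _ = (((NormedSpace.exp (t • C)).mulVec η i : ℝ) : ℂ) :=
          (RingHom.map_mulVec Complex.ofRealHom _ η i).symm
  -- boundedness of g
  have hgB : ∀ t : ℝ, 0 ≤ t → ‖g t‖ ≤ B := by
    intro t ht
    rw [pi_norm_le_iff_of_nonneg hB0]
    intro i
    rw [hcoe t i, Complex.norm_real, Real.norm_eq_abs]
    have h4 : ((NormedSpace.exp (t • C)).mulVec η i) ^ 2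
        ≤ ∑ i', ((NormedSpace.exp (t • C)).mulVec η i') ^ 2 :=
      Finset.single_le_sum (f := fun i' => ((NormedSpace.exp (t • C)).mulVec η i') ^ 2)
        (fun _ _ => sq_nonneg _) (Finset.mem_univ i)
    calc |(NormedSpace.exp (t • C)).mulVec η i|
        = Real.sqrt (((NormedSpace.exp (t • C)).mulVec η i) ^ 2) :=
          (Real.sqrt_sq_eq_abs _).symm
      _ ≤ Real.sqrt (∑ i', ((NormedSpace.exp (t • C)).mulVec η i') ^ 2) :=
          Real.sqrt_le_sqrt h4
      _ ≤ B := hB t ht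
  -- spectral decomposition
  obtain ⟨s, v, hs, hann, hx⟩ := decomp A ηc
  set w : ℂ → ℕ → (Fin m → ℂ) := fun μ j => ((A - μ • 1) ^ j).mulVec (v μ) with hw
  have hgsum : ∀ t : ℝ, g t = ∑ μ ∈ s, ∑ j ∈ Finset.range m,
      (Complex.exp (t * μ) * (t : ℂ) ^ j * ((Nat.factorial j : ℕ) : ℂ)⁻¹) • w μ j := by
    intro t
    rw [hg]
    simp only
    rw [hx]
    rw [show (NormedSpace.exp ((t : ℂ) • A)) *ᵥ (∑ μ ∈ s, v μ)
        = ∑ μ ∈ s, (NormedSpace.exp ((t : ℂ) • A)) *ᵥ v μ by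
      simp only [← Matrix.mulVecLin_apply, map_sum]]
    exact Finset.sum_congr rfl fun μ _ => exp_smul_mulVec A μ m (v μ) (hann μ) t
  -- split off the zero eigenvalue part
  set u : Fin m → ℂ := if (0 : ℂ) ∈ s then v 0 else 0 with hu
  set c : ℕ → (Fin m → ℂ) := fun j => (((Nat.factorial j : ℕ) : ℂ))⁻¹ •
    ((A - (0 : ℂ) • 1) ^ j).mulVec u with hc
  set D : ℝ → (Fin m → ℂ) := fun t => ∑ μ ∈ s.erase 0, ∑ j ∈ Finset.range m,
    (Complex.exp (t * μ) * (t : ℂ) ^ j * ((Nat.factorial j : ℕ) : ℂ)⁻¹) • w μ j with hD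
  have hsplit : ∀ t : ℝ, g t = (∑ j ∈ Finset.range m, t ^ j • c j) + D t := by
    intro t
    have hcj : ∀ j : ℕ, ((t : ℂ) ^ j * ((Nat.factorial j : ℕ) : ℂ)⁻¹) •
        ((A - (0 : ℂ) • 1) ^ j).mulVec u = t ^ j • c j := by
      intro j
      rw [hc]
      simp only
      rw [mul_smul, ← Complex.ofReal_pow, Complex.coe_smul]
    rw [hgsum t, hD]
    simp only
    by_cases h0 : (0 : ℂ) ∈ s
    · rw [← Finset.add_sum_erase _ _ h0]
      congr 1
      rw [← Finset.sum_congr rfl (fun j _ => hcj j)]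
      refine Finset.sum_congr rfl fun j _ => ?_
      simp only [hw, hu, if_pos h0]
      rw [mul_zero, Complex.exp_zero, one_mul]
    · rw [Finset.erase_eq_of_notMem h0]
      have : ∀ j ∈ Finset.range m, t ^ j • c j = 0 := by
        intro j _
        simp only [hc, hu, if_neg h0, Matrix.mulVec_zero, smul_zero]
      rw [Finset.sum_congr rfl this, Finset.sum_const_zero, zero_add]
  -- the decaying part
  have hDlim : Tendsto D atTop (nhds 0) := by
    have : Tendsto D atTop (nhds (∑ μ ∈ s.erase 0, ∑ j ∈ Finset.range m, (0 : Fin m → ℂ))) := by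
      apply tendsto_finset_sum
      intro μ hμ
      apply tendsto_finset_sum
      intro j _
      have hμs : μ ∈ s := Finset.mem_of_mem_erase hμ
      have hμ0 : μ ≠ 0 := Finset.ne_of_mem_erase hμ
      have hre : μ.re < 0 := by
        rcases hspec μ (hs μ hμs) with h | h
        · exact h
        · exact absurd h hμ0
      have h5 : Tendsto (fun t : ℝ => (Complex.exp (t * μ) * (t : ℂ) ^ j) •
          ((((Nat.factorial j : ℕ) : ℂ))⁻¹ • w μ j)) atTop (nhds 0) := by
        have := (tendsto_exp_pow_zero hre j).smul_const
          ((((Nat.factorial j : ℕ) : ℂ))⁻¹ • w μ j)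
        rwa [zero_smul] at this
      refine h5.congr fun t => ?_
      rw [smul_smul, mul_assoc]
    simpa using this
  -- the polynomial part is eventually bounded
  have hbound : ∀ᶠ t : ℝ in atTop, ‖∑ j ∈ Finset.range m, t ^ j • c j‖ ≤ B + 1 := by
    have hD1 : ∀ᶠ t : ℝ in atTop, ‖D t‖ < 1 := by
      have := Metric.tendsto_nhds.mp hDlim 1 one_pos
      filter_upwards [this] with t ht
      rwa [dist_zero_right] at ht
    filter_upwards [hD1, eventually_ge_atTop (0:ℝ)] with t h1 h2
    have hPg : ∑ j ∈ Finset.range m, t ^ j • c j = g t - D t := by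
      rw [hsplit t]; abel
    rw [hPg]
    calc ‖g t - D t‖ ≤ ‖g t‖ + ‖D t‖ := norm_sub_le _ _
      _ ≤ B + 1 := add_le_add (hgB t h2) h1.le
  -- conclude the polynomial part is constant
  have hm1 : m - 1 + 1 = m := by omega
  have hczero : ∀ j, 1 ≤ j → j ≤ m - 1 → c j = 0 := by
    apply coeff_eq_zero_of_bounded (m - 1) c (B + 1)
    rwa [hm1]
  have hPconst : ∀ t : ℝ, ∑ j ∈ Finset.range m, t ^ j • c j = c 0 := by
    intro t
    rw [Finset.sum_eq_single_of_mem 0 (Finset.mem_range.mpr (by omega))]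
    · rw [pow_zero, one_smul]
    · intro j hj hj0
      rw [hczero j (by omega) (by have := Finset.mem_range.mp hj; omega), smul_zero]
  have hgt : Tendsto g atTop (nhds (c 0)) := by
    have heq : ∀ t : ℝ, g t = c 0 + D t := by
      intro t
      rw [hsplit t, hPconst t]
    have h6 : Tendsto (fun t : ℝ => c 0 + D t) atTop (nhds (c 0 + 0)) :=
      tendsto_const_nhds.add hDlim
    rw [add_zero] at h6
    exact h6.congr fun t => (heq t).symm
  -- back to ℝ
  refine ⟨fun i => (c 0 i).re, ?_⟩
  rw [tendsto_pi_nhds]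
  intro i
  have hgi : Tendsto (fun t : ℝ => g t i) atTop (nhds (c 0 i)) :=
    (tendsto_pi_nhds.mp hgt) i
  have h7 : Tendsto (fun t : ℝ => (g t i).re) atTop (nhds ((c 0 i).re)) :=
    (Complex.continuous_re.tendsto _).comp hgi
  refine h7.congr fun t => ?_
  rw [hcoe t i, Complex.ofReal_re]
end

section
/- Let q(x) = (1+x²) e^{x⁴} and b(x) = −3x(1+x²) e^{x⁴} for x ∈ ℝ. There exists no function φ : ℝ → ℝ which is twice continuously differentiable, strictly positive, satisfies φ(x) → +∞ as |x| → +∞, and for which both of the following hold: (a) there exist constants a > 0 and c > 0 with q(x) φ''(x) + b(x) φ'(x) ≤ a − c φ(x) for every x ∈ ℝ; (b) there exists a constant c' > 0 with q(x) ≤ c' (1+x²) φ(x) for every x ∈ ℝ. -/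
open Filter

set_option maxHeartbeats 1600000 in
/-- For `q(x) = (1+x²) e^{x⁴}` and `b(x) = -3x(1+x²) e^{x⁴}`, there is no `C²` function
`φ : ℝ → ℝ`, strictly positive and blowing up as `|x| → +∞`, such that both
`q φ'' + b φ' ≤ a - c φ` on `ℝ` for some `a, c > 0`, and `q(x) ≤ c' (1+x²) φ(x)` on `ℝ`
for some `c' > 0`. -/
theorem no_lyapunov_function_with_growth_bound :
    ¬ ∃ φ : ℝ → ℝ, ContDiff ℝ 2 φ ∧ (∀ x, 0 < φ x) ∧
      Tendsto φ (cocompact ℝ) atTop ∧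
      (∃ a > (0 : ℝ), ∃ c > (0 : ℝ), ∀ x : ℝ,
        (1 + x ^ 2) * Real.exp (x ^ 4) * iteratedDeriv 2 φ x
          + (-(3 * x * (1 + x ^ 2) * Real.exp (x ^ 4))) * deriv φ x ≤ a - c * φ x) ∧
      (∃ c' > (0 : ℝ), ∀ x : ℝ,
        (1 + x ^ 2) * Real.exp (x ^ 4) ≤ c' * (1 + x ^ 2) * φ x) := by
  rintro ⟨φ, hφ, hpos, -, ⟨a, ha, c, hc, hLyap⟩, c', hc', hgrow⟩
  -- basic differentiability facts
  have hφ11 : ContDiff ℝ ((1:ℕ)+1) φ := by norm_num at hφ ⊢; exact hφ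
  have hd1 : Differentiable ℝ φ := hφ.differentiable (by norm_num)
  have hd2 : Differentiable ℝ (deriv φ) :=
    ((contDiff_succ_iff_deriv.mp hφ11).2.2).differentiable (by norm_num)
  have hiter : iteratedDeriv 2 φ = deriv (deriv φ) := by
    simp [iteratedDeriv_succ, iteratedDeriv_zero]
  -- Step 1: φ'' - 3x φ' ≤ a
  have hD : ∀ x : ℝ, deriv (deriv φ) x - 3*x*deriv φ x ≤ a := by
    intro x
    have hq : (1:ℝ) ≤ (1 + x^2) * Real.exp (x^4) := by
      nlinarith [Real.one_le_exp (by positivity : (0:ℝ) ≤ x^4), sq_nonneg x,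
        Real.exp_pos (x^4)]
    have h1 := hLyap x
    rw [hiter] at h1
    have hφx := hpos x
    rcases le_or_gt (deriv (deriv φ) x - 3*x*deriv φ x) 0 with h | h
    · linarith
    · nlinarith [mul_pos hc hφx]
  -- Step 2: g(x) = exp(-(3x²)/2) φ'(x) has derivative exp(-(3x²)/2)(φ'' - 3x φ') ≤ a
  have hg : ∀ x : ℝ, HasDerivAt (fun t => Real.exp (-(3*t^2)/2) * deriv φ t)
      (Real.exp (-(3*x^2)/2) * (deriv (deriv φ) x - 3*x*deriv φ x)) x := by
    intro x
    have h1 : HasDerivAt (fun t : ℝ => -(3*t^2)/2) (-(3*(2*x^1))/2) x :=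
      (((hasDerivAt_pow 2 x).const_mul 3).neg).div_const 2
    have h2 := h1.exp
    have h3 : HasDerivAt (deriv φ) (deriv (deriv φ) x) x := (hd2 x).hasDerivAt
    have h4 := h2.mul h3
    exact h4.congr_deriv (by ring)
  have hgle : ∀ x : ℝ,
      Real.exp (-(3*x^2)/2) * (deriv (deriv φ) x - 3*x*deriv φ x) ≤ a := by
    intro x
    have he1 : Real.exp (-(3*x^2)/2) ≤ 1 := by
      rw [Real.exp_le_one_iff]
      nlinarith [sq_nonneg x]
    have he0 : (0:ℝ) ≤ Real.exp (-(3*x^2)/2) := (Real.exp_pos _).le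
    calc Real.exp (-(3*x^2)/2) * (deriv (deriv φ) x - 3*x*deriv φ x)
        ≤ Real.exp (-(3*x^2)/2) * a := mul_le_mul_of_nonneg_left (hD x) he0
      _ ≤ 1 * a := mul_le_mul_of_nonneg_right he1 ha.le
      _ = a := one_mul a
  -- Step 3: x ↦ a x - g x is monotone
  have hmono : Monotone (fun x => a * x - Real.exp (-(3*x^2)/2) * deriv φ x) := by
    have hder : ∀ x : ℝ, HasDerivAt (fun t => a * t - Real.exp (-(3*t^2)/2) * deriv φ t)
        (a - Real.exp (-(3*x^2)/2) * (deriv (deriv φ) x - 3*x*deriv φ x)) x := by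
      intro x
      have h1 : HasDerivAt (fun t : ℝ => a * t) a x := by
        simpa using (hasDerivAt_id x).const_mul a
      exact h1.sub (hg x)
    apply monotone_of_deriv_nonneg
    · exact fun x => (hder x).differentiableAt
    · intro x
      rw [(hder x).deriv]
      linarith [hgle x]
  -- Step 4: for 0 ≤ t, g t ≤ g 0 + a t ≤ |φ'(0)| + a t
  have hgb : ∀ t : ℝ, 0 ≤ t →
      Real.exp (-(3*t^2)/2) * deriv φ t ≤ |deriv φ 0| + a * t := by
    intro t ht
    have h0 := hmono ht
    simp only [mul_zero] at h0
    have hg0 : Real.exp (-(3*(0:ℝ)^2)/2) * deriv φ 0 = deriv φ 0 := by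
      norm_num
    rw [hg0] at h0
    have := le_abs_self (deriv φ 0)
    linarith
  -- Step 5: for every 2 ≤ X, exp(X²) ≤ 2B
  set B : ℝ := c' * (φ 0 + |deriv φ 0| + a + 1) with hBdef
  have hB : 0 < B := by
    have := hpos 0
    have := abs_nonneg (deriv φ 0)
    positivity
  have hkey : ∀ X : ℝ, 2 ≤ X → Real.exp (X^2) ≤ 2 * B := by
    intro X hX2
    have hX0 : (0:ℝ) ≤ X := by linarith
    have hX1 : (1:ℝ) ≤ X := by linarith
    -- bound on deriv φ on [0, X]
    set M : ℝ := |deriv φ 0| + a * X with hMdef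
    set K : ℝ := Real.exp (3*X^2/2) * M with hKdef
    have hM : 0 ≤ M := add_nonneg (abs_nonneg _) (mul_nonneg ha.le hX0)
    have hK : 0 ≤ K := mul_nonneg (Real.exp_pos _).le hM
    have hderiv_bound : ∀ t ∈ Set.Icc (0:ℝ) X, deriv φ t ≤ K := by
      intro t ht
      have hgt := hgb t ht.1
      have hgtM : Real.exp (-(3*t^2)/2) * deriv φ t ≤ M := by
        have : a * t ≤ a * X := mul_le_mul_of_nonneg_left ht.2 ha.le
        linarith
      have hrw : deriv φ t = Real.exp (3*t^2/2) * (Real.exp (-(3*t^2)/2) * deriv φ t) := by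
        rw [← mul_assoc, ← Real.exp_add]
        have h0 : 3*t^2/2 + -(3*t^2)/2 = 0 := by ring
        rw [h0, Real.exp_zero, one_mul]
      rcases le_total (Real.exp (-(3*t^2)/2) * deriv φ t) 0 with h0 | h0
      · have : deriv φ t ≤ 0 := by
          rw [hrw]
          exact mul_nonpos_of_nonneg_of_nonpos (Real.exp_pos _).le h0
        linarith
      · rw [hrw]
        calc Real.exp (3*t^2/2) * (Real.exp (-(3*t^2)/2) * deriv φ t)
            ≤ Real.exp (3*X^2/2) * (Real.exp (-(3*t^2)/2) * deriv φ t) := by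
              apply mul_le_mul_of_nonneg_right _ h0
              apply Real.exp_le_exp.2
              nlinarith [ht.1, ht.2]
          _ ≤ Real.exp (3*X^2/2) * M :=
              mul_le_mul_of_nonneg_left hgtM (Real.exp_pos _).le
    -- φ X ≤ φ 0 + K X
    have hφX : φ X ≤ φ 0 + K * X := by
      have hder : ∀ t : ℝ, HasDerivAt (fun s => φ 0 + K * s - φ s) (K - deriv φ t) t := by
        intro t
        have h1 : HasDerivAt (fun s : ℝ => φ 0 + K * s) K t := by
          simpa using ((hasDerivAt_id t).const_mul K).const_add (φ 0)
        exact h1.sub (hd1 t).hasDerivAt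
      have hmono2 : MonotoneOn (fun s => φ 0 + K * s - φ s) (Set.Icc (0:ℝ) X) := by
        apply monotoneOn_of_deriv_nonneg (convex_Icc 0 X)
        · exact fun t _ => (hder t).continuousAt.continuousWithinAt
        · exact fun t _ => ((hder t).differentiableAt).differentiableWithinAt
        · intro t htm
          rw [interior_Icc] at htm
          rw [(hder t).deriv]
          have := hderiv_bound t ⟨htm.1.le, htm.2.le⟩
          linarith
      have h01 : (0:ℝ) ∈ Set.Icc (0:ℝ) X := ⟨le_refl 0, hX0⟩
      have h02 : X ∈ Set.Icc (0:ℝ) X := ⟨hX0, le_refl X⟩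
      have := hmono2 h01 h02 hX0
      simp only [mul_zero] at this
      linarith
    -- from growth bound: exp(X⁴) ≤ c' φ X
    have hgX : Real.exp (X^4) ≤ c' * φ X := by
      have h1 := hgrow X
      have h2 : (0:ℝ) < 1 + X^2 := by positivity
      nlinarith [h1, h2]
    -- assemble
    have hexpX2 : X^2 ≤ Real.exp (X^2) := by
      linarith [Real.add_one_le_exp (X^2)]
    have hMX : c' * (M * X) ≤ B * X^2 := by
      have hXX : X ≤ X^2 := by nlinarith
      have h1 : M * X ≤ (|deriv φ 0| + a + 1) * X^2 := by
        have := mul_nonneg (abs_nonneg (deriv φ 0)) (by linarith : (0:ℝ) ≤ X^2 - X)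
        nlinarith [sq_nonneg X]
      have h2 : c' * (M * X) ≤ c' * ((|deriv φ 0| + a + 1) * X^2) :=
        mul_le_mul_of_nonneg_left h1 hc'.le
      have h3 : c' * ((|deriv φ 0| + a + 1) * X^2) ≤ B * X^2 := by
        rw [hBdef]
        nlinarith [mul_nonneg (mul_nonneg hc'.le (hpos 0).le) (sq_nonneg X)]
      linarith
    have hchain : Real.exp (X^4) ≤ B + B * Real.exp (5*X^2/2) := by
      have h1 : Real.exp (X^4) ≤ c' * φ 0 + c' * (K * X) := by
        have := mul_le_mul_of_nonneg_left hφX hc'.le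
        nlinarith
      have h2 : c' * (K * X) = Real.exp (3*X^2/2) * (c' * (M * X)) := by
        rw [hKdef]; ring
      have h3 : Real.exp (3*X^2/2) * (c' * (M * X)) ≤ Real.exp (3*X^2/2) * (B * X^2) :=
        mul_le_mul_of_nonneg_left hMX (Real.exp_pos _).le
      have h4 : Real.exp (3*X^2/2) * (B * X^2) ≤ B * (Real.exp (3*X^2/2) * Real.exp (X^2)) := by
        have := mul_le_mul_of_nonneg_left hexpX2 (mul_nonneg (Real.exp_pos (3*X^2/2)).le hB.le)
        nlinarith
      have h5 : Real.exp (3*X^2/2) * Real.exp (X^2) = Real.exp (5*X^2/2) := by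
        rw [← Real.exp_add]; ring_nf
      have h6 : c' * φ 0 ≤ B := by
        rw [hBdef]
        nlinarith [mul_nonneg hc'.le (by positivity : (0:ℝ) ≤ |deriv φ 0| + a + 1)]
      rw [h5] at h4
      linarith
    have hone : (1:ℝ) ≤ Real.exp (5*X^2/2) := Real.one_le_exp (by positivity)
    have h2B : Real.exp (X^4) ≤ 2 * B * Real.exp (5*X^2/2) := by
      have hBE : B ≤ B * Real.exp (5*X^2/2) := le_mul_of_one_le_right hB.le hone
      nlinarith [hBE, hchain]
    have hsplit : Real.exp (X^4) = Real.exp (X^4 - 5*X^2/2) * Real.exp (5*X^2/2) := by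
      rw [← Real.exp_add]; congr 1; ring
    have hfin : Real.exp (X^4 - 5*X^2/2) ≤ 2 * B := by
      have hp := Real.exp_pos (5*X^2/2)
      rw [hsplit] at h2B
      exact le_of_mul_le_mul_right (by linarith) hp
    have hle : Real.exp (X^2) ≤ Real.exp (X^4 - 5*X^2/2) := by
      apply Real.exp_le_exp.2
      have hXsq4 : (4:ℝ) ≤ X^2 := by nlinarith
      have h44 : 4*X^2 ≤ X^2*X^2 := mul_le_mul_of_nonneg_right hXsq4 (sq_nonneg X)
      nlinarith [h44, sq_nonneg X]
    linarith
  -- final contradiction: pick X with X² > log (2B)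
  set m : ℝ := max 4 (Real.log (2*B) + 1) with hm
  have hm4 : (4:ℝ) ≤ m := le_max_left _ _
  have hm0 : (0:ℝ) ≤ m := by linarith
  set X : ℝ := Real.sqrt m with hXdef
  have hX2 : 2 ≤ X := by
    have : Real.sqrt 4 ≤ Real.sqrt m := Real.sqrt_le_sqrt hm4
    have h4 : Real.sqrt 4 = 2 := by
      rw [show (4:ℝ) = 2^2 by norm_num, Real.sqrt_sq (by norm_num : (0:ℝ) ≤ 2)]
    linarith [this, h4.symm.le]
  have hXsq : X^2 = m := Real.sq_sqrt hm0
  have hlog : Real.log (2*B) + 1 ≤ m := le_max_right _ _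
  have hexp : 2*B < Real.exp (X^2) := by
    rw [hXsq]
    calc 2*B = Real.exp (Real.log (2*B)) := (Real.exp_log (by linarith)).symm
      _ < Real.exp m := Real.exp_lt_exp.2 (by linarith)
  linarith [hkey X hX2]
end

section
/- Let d ≥ 1, let Q⁰ be a constant symmetric positive definite d×d real matrix, let γ ≥ 0, b₀ > 0, β > max(γ − 1, 0) and σ > 0. Then there exist constants a > 0 and c > 0 such that for every x ∈ ℝ^d, (1+|x|²)^γ [ 2σ (1+|x|²)^{σ−1} Tr Q⁰ + 4σ(σ−1) (1+|x|²)^{σ−2} ⟨Q⁰ x, x⟩ ] − 2σ b₀ |x|² (1+|x|²)^{β+σ−1} ≤ a − c (1+|x|²)^σ. (This expresses that φ_σ(x) = (1+|x|²)^σ satisfies Tr(Q(x) D²φ_σ(x)) + ⟨b(x), ∇φ_σ(x)⟩ ≤ a − c φ_σ(x) for the coefficients Q(x) = (1+|x|²)^γ Q⁰ and b(x) = −b₀ x (1+|x|²)^β.) -/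
open Matrix

set_option maxHeartbeats 1000000 in
/-- For a symmetric positive definite `d × d` matrix `Q⁰`, `γ ≥ 0`, `b₀ > 0`,
`β > max(γ-1, 0)` and `σ > 0`, there exist `a, c > 0` such that for every `x ∈ ℝ^d`,
`(1+|x|²)^γ [2σ(1+|x|²)^{σ-1} Tr Q⁰ + 4σ(σ-1)(1+|x|²)^{σ-2} ⟨Q⁰x, x⟩]
  - 2σ b₀ |x|² (1+|x|²)^{β+σ-1} ≤ a - c (1+|x|²)^σ`,
i.e. `φ_σ(x) = (1+|x|²)^σ` satisfies `Tr(Q D²φ_σ) + ⟨b, ∇φ_σ⟩ ≤ a - c φ_σ` for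
`Q(x) = (1+|x|²)^γ Q⁰` and `b(x) = -b₀ x (1+|x|²)^β`. -/
theorem lyapunov_condition_for_power_phi
    (d : ℕ) (hd : 1 ≤ d) (Q0 : Matrix (Fin d) (Fin d) ℝ)
    (hsym : Q0.IsSymm) (hpd : Q0.PosDef) (γ b₀ β σ : ℝ)
    (hγ : 0 ≤ γ) (hb : 0 < b₀) (hβ : max (γ - 1) 0 < β) (hσ : 0 < σ) :
    ∃ a > (0 : ℝ), ∃ c > (0 : ℝ), ∀ x : Fin d → ℝ,
      (1 + ∑ i, x i ^ 2) ^ γ *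
          (2 * σ * (1 + ∑ i, x i ^ 2) ^ (σ - 1) * Q0.trace
            + 4 * σ * (σ - 1) * (1 + ∑ i, x i ^ 2) ^ (σ - 2) * (Q0.mulVec x ⬝ᵥ x))
        - 2 * σ * b₀ * (∑ i, x i ^ 2) * (1 + ∑ i, x i ^ 2) ^ (β + σ - 1)
      ≤ a - c * (1 + ∑ i, x i ^ 2) ^ σ := by
  have hβ0 : 0 < β := lt_of_le_of_lt (le_max_right _ _) hβ
  have hβγ : γ - 1 < β := lt_of_le_of_lt (le_max_left _ _) hβ
  -- trace positive
  have htr : 0 < Q0.trace := by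
    have hdiag : ∀ i, 0 < Q0 i i := by
      intro i
      have h := hpd.dotProduct_mulVec_pos (x := Pi.single i 1)
        (by simp [Pi.single_eq_same, Function.ne_iff])
      simpa [mulVec, dotProduct, Pi.single_apply] using h
    have hne : Nonempty (Fin d) := ⟨⟨0, hd⟩⟩
    exact Finset.sum_pos (fun i _ => hdiag i) Finset.univ_nonempty
  set M : ℝ := ∑ i, ∑ j, |Q0 i j| with hMdef
  have hM0 : 0 ≤ M := Finset.sum_nonneg fun i _ => Finset.sum_nonneg fun j _ => abs_nonneg _
  have hσ4 : (0:ℝ) ≤ 4 * σ * |σ - 1| :=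
    mul_nonneg (mul_nonneg (by norm_num) hσ.le) (abs_nonneg _)
  have hσ4M : (0:ℝ) ≤ 4 * σ * |σ - 1| * M := mul_nonneg hσ4 hM0
  have hσb : (0:ℝ) < σ * b₀ := mul_pos hσ hb
  set K : ℝ := 2 * σ * Q0.trace + 4 * σ * |σ - 1| * M with hKdef
  have hK0 : 0 < K := by nlinarith
  set q : ℝ := β + σ with hqdef
  set δ : ℝ := min (β - γ + 1) (min 1 β) with hδdef
  have hδ0 : 0 < δ := by
    simp only [hδdef, lt_min_iff]
    exact ⟨by linarith, by norm_num, hβ0⟩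
  have hδβ : δ ≤ β := le_trans (min_le_right _ _) (min_le_right _ _)
  have hδ1 : δ ≤ 1 := le_trans (min_le_right _ _) (min_le_left _ _)
  have hδγ : δ ≤ β - γ + 1 := min_le_left _ _
  set L : ℝ := K + 2 * σ * b₀ + σ * b₀ with hLdef
  have hL0 : 0 < L := by nlinarith
  set T : ℝ := max 1 ((L / (σ * b₀)) ^ (δ⁻¹ : ℝ)) with hTdef
  have hT1 : 1 ≤ T := le_max_left _ _
  have hT0 : (0:ℝ) < T := lt_of_lt_of_le one_pos hT1
  refine ⟨L * T ^ (q - δ), mul_pos hL0 (Real.rpow_pos_of_pos hT0 _), σ * b₀, hσb,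
    fun x => ?_⟩
  set s : ℝ := ∑ i, x i ^ 2 with hsdef
  have hs0 : 0 ≤ s := Finset.sum_nonneg fun i _ => sq_nonneg _
  set t : ℝ := 1 + s with htdef
  have ht1 : 1 ≤ t := by rw [htdef]; linarith
  have ht0 : 0 < t := by linarith
  have hst : s ≤ t := by rw [htdef]; linarith
  -- bound on quadratic form
  have hQxx : |Q0.mulVec x ⬝ᵥ x| ≤ M * s := by
    have hxx : ∀ i j : Fin d, |x j * x i| ≤ s := by
      intro i j
      have hi : x i ^ 2 ≤ s := Finset.single_le_sum (f := fun k => x k ^ 2)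
        (fun k _ => sq_nonneg _) (Finset.mem_univ i)
      have hj : x j ^ 2 ≤ s := Finset.single_le_sum (f := fun k => x k ^ 2)
        (fun k _ => sq_nonneg _) (Finset.mem_univ j)
      rw [abs_mul]
      nlinarith [sq_nonneg (|x j| - |x i|), sq_abs (x j), sq_abs (x i)]
    calc |Q0.mulVec x ⬝ᵥ x| = |∑ i, (∑ j, Q0 i j * x j) * x i| := by
          simp [mulVec, dotProduct]
      _ ≤ ∑ i, |(∑ j, Q0 i j * x j) * x i| := Finset.abs_sum_le_sum_abs _ _
      _ ≤ ∑ i, ∑ j, |Q0 i j| * s := by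
          refine Finset.sum_le_sum fun i _ => ?_
          calc |(∑ j, Q0 i j * x j) * x i| = |∑ j, Q0 i j * (x j * x i)| := by
                rw [Finset.sum_mul]; congr 1; exact Finset.sum_congr rfl fun j _ => by ring
            _ ≤ ∑ j, |Q0 i j * (x j * x i)| := Finset.abs_sum_le_sum_abs _ _
            _ ≤ ∑ j, |Q0 i j| * s := by
                refine Finset.sum_le_sum fun j _ => ?_
                rw [abs_mul]
                exact mul_le_mul_of_nonneg_left (hxx i j) (abs_nonneg _)
      _ = M * s := by rw [hMdef, Finset.sum_mul]; exact Finset.sum_congr rfl fun i _ => (Finset.sum_mul _ _ _).symm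
  set Qxx : ℝ := Q0.mulVec x ⬝ᵥ x with hQdef
  have hrp : ∀ u : ℝ, (0:ℝ) ≤ t ^ u := fun u => Real.rpow_nonneg ht0.le u
  have hstep : ∀ u : ℝ, t ^ (u + 1) = t ^ u * t := by
    intro u; rw [Real.rpow_add ht0, Real.rpow_one]
  -- step A : second-order term bound
  have hts : s * t ^ (γ + σ - 2) ≤ t ^ (γ + σ - 1) := by
    calc s * t ^ (γ + σ - 2) ≤ t * t ^ (γ + σ - 2) :=
          mul_le_mul_of_nonneg_right hst (hrp _)
      _ = t ^ (γ + σ - 1) := by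
          have h := hstep (γ + σ - 2)
          rw [show γ + σ - 2 + 1 = γ + σ - 1 by ring] at h
          rw [h]; ring
  have hA2 : 4 * σ * (σ - 1) * Qxx * t ^ (γ + σ - 2)
      ≤ 4 * σ * |σ - 1| * M * t ^ (γ + σ - 1) := by
    have h1 : 4 * σ * (σ - 1) * Qxx ≤ 4 * σ * |σ - 1| * (M * s) := by
      calc 4 * σ * (σ - 1) * Qxx ≤ |4 * σ * (σ - 1) * Qxx| := le_abs_self _
        _ = 4 * σ * |σ - 1| * |Qxx| := by
            rw [abs_mul, abs_mul, abs_mul]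
            rw [abs_of_pos hσ, abs_of_nonneg (by norm_num : (0:ℝ) ≤ 4)]
        _ ≤ 4 * σ * |σ - 1| * (M * s) :=
            mul_le_mul_of_nonneg_left hQxx hσ4
    calc 4 * σ * (σ - 1) * Qxx * t ^ (γ + σ - 2)
        ≤ 4 * σ * |σ - 1| * (M * s) * t ^ (γ + σ - 2) :=
          mul_le_mul_of_nonneg_right h1 (hrp _)
      _ = 4 * σ * |σ - 1| * M * (s * t ^ (γ + σ - 2)) := by ring
      _ ≤ 4 * σ * |σ - 1| * M * t ^ (γ + σ - 1) :=
          mul_le_mul_of_nonneg_left hts hσ4M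
  -- rewrite of the full LHS
  have hLHS : t ^ γ * (2 * σ * t ^ (σ - 1) * Q0.trace
        + 4 * σ * (σ - 1) * t ^ (σ - 2) * Qxx)
      = 2 * σ * Q0.trace * t ^ (γ + σ - 1)
        + 4 * σ * (σ - 1) * Qxx * t ^ (γ + σ - 2) := by
    have e1 : t ^ γ * t ^ (σ - 1) = t ^ (γ + σ - 1) := by
      rw [← Real.rpow_add ht0]; ring_nf
    have e2 : t ^ γ * t ^ (σ - 2) = t ^ (γ + σ - 2) := by
      rw [← Real.rpow_add ht0]; ring_nf
    calc t ^ γ * (2 * σ * t ^ (σ - 1) * Q0.trace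
          + 4 * σ * (σ - 1) * t ^ (σ - 2) * Qxx)
        = 2 * σ * Q0.trace * (t ^ γ * t ^ (σ - 1))
          + 4 * σ * (σ - 1) * Qxx * (t ^ γ * t ^ (σ - 2)) := by ring
      _ = _ := by rw [e1, e2]
  -- step B : drift term identity
  have hB : 2 * σ * b₀ * s * t ^ (β + σ - 1)
      = 2 * σ * b₀ * t ^ (β + σ) - 2 * σ * b₀ * t ^ (β + σ - 1) := by
    have e3 : t ^ (β + σ) = t ^ (β + σ - 1) * t := by
      have h := hstep (β + σ - 1)
      rw [show β + σ - 1 + 1 = β + σ by ring] at h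
      exact h
    have e4 : s = t - 1 := by rw [htdef]; ring
    rw [e3, e4]; ring
  -- step C : dominate everything by L * t ^ (q - δ)
  have hC : K * t ^ (γ + σ - 1) + 2 * σ * b₀ * t ^ (β + σ - 1) + σ * b₀ * t ^ σ
      ≤ L * t ^ (q - δ) := by
    have c1 : t ^ (γ + σ - 1) ≤ t ^ (q - δ) :=
      Real.rpow_le_rpow_of_exponent_le ht1 (by rw [hqdef]; linarith)
    have c2 : t ^ (β + σ - 1) ≤ t ^ (q - δ) :=
      Real.rpow_le_rpow_of_exponent_le ht1 (by rw [hqdef]; linarith)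
    have c3 : t ^ σ ≤ t ^ (q - δ) :=
      Real.rpow_le_rpow_of_exponent_le ht1 (by rw [hqdef]; linarith)
    have := mul_le_mul_of_nonneg_left c1 hK0.le
    have := mul_le_mul_of_nonneg_left c2 (by nlinarith : (0:ℝ) ≤ 2 * σ * b₀)
    have := mul_le_mul_of_nonneg_left c3 hσb.le
    rw [hLdef]; nlinarith
  -- step D : case split on t vs T
  have hD : L * t ^ (q - δ) ≤ L * T ^ (q - δ) + 2 * σ * b₀ * t ^ q := by
    rcases le_total t T with h | h
    · have h1 : t ^ (q - δ) ≤ T ^ (q - δ) :=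
        Real.rpow_le_rpow ht0.le h (by rw [hqdef]; linarith)
      have h2 : (0:ℝ) ≤ 2 * σ * b₀ * t ^ q := by
        have := hrp q; nlinarith
      nlinarith [mul_le_mul_of_nonneg_left h1 hL0.le]
    · have h2 : (L / (σ * b₀)) ^ (δ⁻¹ : ℝ) ≤ t := le_trans (le_max_right _ _) h
      have h3 : ((L / (σ * b₀)) ^ (δ⁻¹ : ℝ)) ^ δ ≤ t ^ δ :=
        Real.rpow_le_rpow (Real.rpow_nonneg (div_nonneg hL0.le hσb.le) _) h2 hδ0.le
      rw [Real.rpow_inv_rpow (div_nonneg hL0.le hσb.le) hδ0.ne'] at h3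
      rw [div_le_iff₀ hσb] at h3
      have hLt : L ≤ σ * b₀ * t ^ δ := by linarith
      have h4 : L * t ^ (q - δ) ≤ σ * b₀ * t ^ δ * t ^ (q - δ) :=
        mul_le_mul_of_nonneg_right hLt (hrp _)
      have heq : t ^ δ * t ^ (q - δ) = t ^ q := by
        rw [← Real.rpow_add ht0]; ring_nf
      have h5 : (0:ℝ) ≤ σ * b₀ * t ^ q := mul_nonneg hσb.le (hrp _)
      have h6 : (0:ℝ) < L * T ^ (q - δ) := mul_pos hL0 (Real.rpow_pos_of_pos hT0 _)
      nlinarith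
  -- combine
  have hq1 : β + σ - 1 = q - 1 := by rw [hqdef]
  have habs : Qxx ≤ M * s := le_trans (le_abs_self _) hQxx
  rw [hLHS, hB]
  have hKt : 2 * σ * Q0.trace * t ^ (γ + σ - 1)
      + 4 * σ * (σ - 1) * Qxx * t ^ (γ + σ - 2) ≤ K * t ^ (γ + σ - 1) := by
    rw [hKdef, add_mul]; linarith [hA2]
  have hqq : t ^ (β + σ) = t ^ q := by rw [hqdef]
  linarith [hC, hD, hKt, hqq]
end
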